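/- arXiv:1408.1178 — 4 statements merged into one kernel-verified Lean document; each statement's English description precedes it below -/
import Mathlib

section
/- (Equidivisibility of tensor products of unit vectors.) Let n ≥ 2, let x be a unit vector in V_{n,m}, y a unit vector in V_{n,l}, and assume m > l. (a) If w is a unit vector in V_{n,k}, z is a unit vector in V_{n,m+k−l}, and x ⊗ w = y ⊗ z, then there exists a unit vector x' ∈ V_{n,m−l} such that x = y ⊗ x'. (b) If w is a unit vector in V_{n,k}, z is a unit vector in V_{n,m+k−l}, and w ⊗ x = z ⊗ y, then there exists a unit vector x'' ∈ V_{n,m−l} such that x = x'' ⊗ y. -/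
noncomputable section

/-- `Vnm n m` is the Hilbert space `ℓ²({1,…,n}^m)`, identified with `(ℂ^n)^{⊗m}`. -/
abbrev Vnm (n m : ℕ) : Type := EuclideanSpace ℂ (Fin m → Fin n)

/-- The tensor product `x ⊗ y`, via `(x ⊗ y)_{JK} = x_J y_K`. -/
def tensV {n m l : ℕ} (x : Vnm n m) (y : Vnm n l) : Vnm n (m + l) :=
  WithLp.toLp 2 fun J => x (fun i => J (Fin.castAdd l i)) * y (fun i => J (Fin.natAdd m i))

/-- Re-indexing of a tensor along an equality of lengths. -/
def castV {n m m' : ℕ} (h : m = m') (z : Vnm n m) : Vnm n m' :=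
  WithLp.toLp 2 fun J => z (fun i => J (Fin.cast h i))

/-- The tensor power `x^{⊗p}`. -/
def tpowV {n m : ℕ} (x : Vnm n m) (p : ℕ) : Vnm n (p * m) :=
  WithLp.toLp 2 fun J => ∏ i : Fin p, x (fun t => J ⟨(i : ℕ) * m + (t : ℕ), by
    have h2 : (t : ℕ) < m := t.isLt
    have h1 : (i : ℕ) + 1 ≤ p := i.isLt
    have h3 : ((i : ℕ) + 1) * m = (i : ℕ) * m + m := by ring
    have h4 : ((i : ℕ) + 1) * m ≤ p * m := Nat.mul_le_mul_right m h1
    omega⟩)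

/-- The coordinatewise complex conjugate. -/
def conjV {n m : ℕ} (z : Vnm n m) : Vnm n m := WithLp.toLp 2 fun J => starRingEnd ℂ (z J)

/-- A unit vector `z` is periodic if `z = x^{⊗p}` for some unit vector `x` and `p ≥ 2`;
it is nonperiodic if it is not periodic. -/
def PeriodicV {n m : ℕ} (z : Vnm n m) : Prop :=
  ∃ (m' p : ℕ) (x : Vnm n m') (h : p * m' = m),
    ‖x‖ = 1 ∧ 2 ≤ p ∧ castV h (tpowV x p) = z

/-- The matricization of `z ∈ V_{n,b+a}` as an operator `V_{n,a} → V_{n,b}`,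
`(T z) e_K = Σ_{|J|=b} z_{JK} e_J`. -/
def matT {n b a : ℕ} (z : Vnm n (b + a)) :
    EuclideanSpace ℂ (Fin a → Fin n) →L[ℂ] EuclideanSpace ℂ (Fin b → Fin n) :=
  LinearMap.toContinuousLinearMap
    (Matrix.toEuclideanLin
      (Matrix.of fun (J : Fin b → Fin n) (K : Fin a → Fin n) => z (Fin.append J K)))

/-- The matricization `T_a(z) : V_{n,a} → V_{n,m-a}` of `z ∈ V_{n,m}`,
`T_a(z) e_K = Σ_{|J|=m−a} z_{JK} e_J`. -/
def Tmat {n m : ℕ} (a : ℕ) (h : a ≤ m) (z : Vnm n m) :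
    EuclideanSpace ℂ (Fin a → Fin n) →L[ℂ] EuclideanSpace ℂ (Fin (m - a) → Fin n) :=
  matT (castV (by omega : m = (m - a) + a) z)

/-- `z` is indecomposable if it is not a tensor product of lower-degree tensors. -/
def IndecomposableV {n m : ℕ} (z : Vnm n m) : Prop :=
  1 ≤ m ∧ ¬ ∃ (a b : ℕ) (h : a + b = m) (x : Vnm n a) (y : Vnm n b),
    1 ≤ a ∧ 1 ≤ b ∧ castV h (tensV x y) = z

/-- The iterated tensor product `x₁ ⊗ ⋯ ⊗ x_l` of homogeneous tensors of degrees `ms i`. -/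
def bigTensV {n l : ℕ} (ms : Fin l → ℕ) (xs : ∀ i, Vnm n (ms i)) : Vnm n (∑ i, ms i) :=
  WithLp.toLp 2 fun J => ∏ i : Fin l, xs i (fun t => J ⟨(∑ j ∈ Finset.Iio i, ms j) + (t : ℕ), by
    have h1 : (∑ j ∈ Finset.Iio i, ms j) + ms i ≤ ∑ j, ms j := by
      calc (∑ j ∈ Finset.Iio i, ms j) + ms i
          = ∑ j ∈ insert i (Finset.Iio i), ms j := by
            rw [Finset.sum_insert (by simp)]; ring
        _ ≤ ∑ j, ms j := Finset.sum_le_sum_of_subset (Finset.subset_univ _)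
    have h2 : (t : ℕ) < ms i := t.isLt
    omega⟩)

/-- `z ⊠ y ∈ V_{nn',m}`: `(z ⊠ y)_L = z_J y_K` where `L = J ⊠ K` is given by the
pairing `l_t = n'·j_t + k_t` of `{0,…,n−1}×{0,…,n'−1}` with `{0,…,nn'−1}`. -/
def boxTensV {n n' m : ℕ} (z : Vnm n m) (y : Vnm n' m) : Vnm (n * n') m :=
  WithLp.toLp 2 fun L =>
    z (fun t => ⟨(L t : ℕ) / n', by
        have h := (L t).isLt
        have hn' : 0 < n' := Nat.pos_of_ne_zero (by rintro rfl; simp at h)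
        exact (Nat.div_lt_iff_lt_mul hn').mpr h⟩) *
    y (fun t => ⟨(L t : ℕ) % n', by
        have h := (L t).isLt
        have hn' : 0 < n' := Nat.pos_of_ne_zero (by rintro rfl; simp at h)
        exact Nat.mod_lt _ hn'⟩)

/-- `z * y := z^{⊗α} ⊠ y^{⊗β} ∈ V_{nn',d}` where `d = αm = βl` is the lcm of `m` and `l`. -/
def starV {n n' m l : ℕ} (z : Vnm n m) (y : Vnm n' l) : Vnm (n * n') (Nat.lcm m l) :=
  boxTensV (castV (Nat.div_mul_cancel (Nat.dvd_lcm_left m l)) (tpowV z (Nat.lcm m l / m)))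
    (castV (Nat.div_mul_cancel (Nat.dvd_lcm_right m l)) (tpowV y (Nat.lcm m l / l)))

/-- Conjugacy of homogeneous tensors: `z = y`, or `z = x₁ ⊗ x₂` and `y = x₂ ⊗ x₁`
for some unit vectors `x₁, x₂`. -/
def ConjVec {n m l : ℕ} (z : Vnm n m) (y : Vnm n l) : Prop :=
  (∃ h : m = l, castV h z = y) ∨
    ∃ (a b : ℕ) (x₁ : Vnm n a) (x₂ : Vnm n b) (h₁ : a + b = m) (h₂ : b + a = l),
      ‖x₁‖ = 1 ∧ ‖x₂‖ = 1 ∧ castV h₁ (tensV x₁ x₂) = z ∧ castV h₂ (tensV x₂ x₁) = y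

/-- A Cuntz family of order `n` on `H`: `Sᵢ* Sⱼ = δᵢⱼ 1` and `Σᵢ Sᵢ Sᵢ* = 1`. -/
def IsCuntzFamily {H : Type*} [NormedAddCommGroup H] [InnerProductSpace ℂ H]
    [CompleteSpace H] {n : ℕ} (S : Fin n → H →L[ℂ] H) : Prop :=
  (∀ i j, (ContinuousLinearMap.adjoint (S i)).comp (S j) = if i = j then 1 else 0) ∧
    ∑ i, (S i).comp (ContinuousLinearMap.adjoint (S i)) = 1

/-- `S_J := S_{j₁} ∘ ⋯ ∘ S_{j_k}` for a word `J = (j₁,…,j_k)`, with `S_∅ = 1`. -/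
def Sword {H : Type*} [NormedAddCommGroup H] [InnerProductSpace ℂ H]
    {ι : Type*} (S : ι → H →L[ℂ] H) : (k : ℕ) → (Fin k → ι) → (H →L[ℂ] H)
  | 0, _ => 1
  | (k + 1), J => (S (J 0)).comp (Sword S k (fun i => J i.succ))

/-- `s(z) := Σ_{|J|=m} z_J S_J`. -/
def sop {H : Type*} [NormedAddCommGroup H] [InnerProductSpace ℂ H]
    {n m : ℕ} (S : Fin n → H →L[ℂ] H) (z : Vnm n m) : H →L[ℂ] H :=
  ∑ J : Fin m → Fin n, z J • Sword S m J


lemma norm_castV {n m m' : ℕ} (h : m = m') (z : Vnm n m) : ‖castV h z‖ = ‖z‖ := by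
  subst h; rfl

def appEquiv (n m l : ℕ) : ((Fin m → Fin n) × (Fin l → Fin n)) ≃ (Fin (m+l) → Fin n) where
  toFun p := Fin.append p.1 p.2
  invFun J := (fun i => J (Fin.castAdd l i), fun i => J (Fin.natAdd m i))
  left_inv p := by
    ext i
    · simp [Fin.append_left]
    · simp [Fin.append_right]
  right_inv J := by
    funext i
    cases i using Fin.addCases with
    | left i => simp [Fin.append_left]
    | right i => simp [Fin.append_right]

lemma norm_tensV {n m l : ℕ} (x : Vnm n m) (y : Vnm n l) :
    ‖tensV x y‖ = ‖x‖ * ‖y‖ := by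
  rw [EuclideanSpace.norm_eq, EuclideanSpace.norm_eq, EuclideanSpace.norm_eq,
    ← Real.sqrt_mul (by positivity)]
  congr 1
  rw [← Equiv.sum_comp (appEquiv n m l), Fintype.sum_prod_type, Finset.sum_mul_sum]
  refine Finset.sum_congr rfl fun A _ => Finset.sum_congr rfl fun B _ => ?_
  have h1 : (fun i => Fin.append A B (Fin.castAdd l i)) = A := funext fun i => Fin.append_left A B i
  have h2 : (fun i => Fin.append A B (Fin.natAdd m i)) = B := funext fun i => Fin.append_right A B i
  show ‖(tensV x y) (Fin.append A B)‖ ^2 = _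
  rw [show (tensV x y) (Fin.append A B) = x A * y B from by rw [tensV, PiLp.toLp_apply]; rw [h1, h2]]
  simp [mul_pow]

lemma subCuntz_partA {n m l : ℕ} (hlm : l < m)
    (x : Vnm n m) (y : Vnm n l) (hx : ‖x‖ = 1) (hy : ‖y‖ = 1)
    (k : ℕ) (w : Vnm n k) (z : Vnm n (m + k - l)) (hw : ‖w‖ = 1)
    (heq : tensV x w = castV (by omega : l + (m + k - l) = m + k) (tensV y z)) :
    ∃ x' : Vnm n (m - l), ‖x'‖ = 1 ∧ x = castV (by omega : l + (m - l) = m) (tensV y x') := by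
  obtain ⟨K₀, hK₀⟩ : ∃ K, w K ≠ 0 := by
    by_contra hc
    push_neg at hc
    have : w = 0 := PiLp.ext hc
    rw [this, norm_zero] at hw
    norm_num at hw
  set x' : Vnm n (m - l) := WithLp.toLp 2 fun J' =>
    (w K₀)⁻¹ * z (fun i => if h : (i : ℕ) < m - l then J' ⟨i, h⟩
      else K₀ ⟨(i : ℕ) - (m - l), by omega⟩) with hx'
  have hdec : x = castV (by omega : l + (m - l) = m) (tensV y x') := by
    refine PiLp.ext fun J => ?_
    set L : Fin (m + k) → Fin n := fun v =>
      if h : (v : ℕ) < m then J ⟨v, h⟩ else K₀ ⟨(v : ℕ) - m, by omega⟩ with hLdef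
    have hL := congrFun (congrArg WithLp.ofLp heq) L
    rw [tensV, PiLp.toLp_apply] at hL
    have e1 : (fun i => L (Fin.castAdd k i)) = J := by
      funext i
      simp only [hLdef, Fin.coe_castAdd]
      rw [dif_pos i.isLt]
    have e2 : (fun i => L (Fin.natAdd m i)) = K₀ := by
      funext i
      simp only [hLdef, Fin.coe_natAdd]
      rw [dif_neg (by omega)]
      congr 1
      ext
      simp
    rw [e1, e2, castV, tensV] at hL
    simp only [PiLp.toLp_apply] at hL
    rw [castV, tensV]
    simp only [PiLp.toLp_apply]
    have e3 : (fun i => L (Fin.cast (by omega : l + (m + k - l) = m + k) (Fin.castAdd (m + k - l) i)))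
        = (fun i : Fin l => J (Fin.cast (by omega : l + (m - l) = m) (Fin.castAdd (m - l) i))) := by
      funext i
      simp only [hLdef, Fin.coe_cast, Fin.coe_castAdd]
      rw [dif_pos (by omega)]
      congr 1
      try ext
      try simp
      try omega
    rw [e3] at hL
    have e4 : z (fun i => L (Fin.cast (by omega : l + (m + k - l) = m + k) (Fin.natAdd l i)))
        = x' (fun i : Fin (m - l) => J (Fin.cast (by omega : l + (m - l) = m) (Fin.natAdd l i))) * w K₀ := by
      simp only [hx', PiLp.toLp_apply]
      have eN : (fun i : Fin (m + k - l) => L (Fin.cast (by omega : l + (m + k - l) = m + k) (Fin.natAdd l i)))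
          = (fun i : Fin (m + k - l) => if h : (i : ℕ) < m - l
              then J (Fin.cast (by omega : l + (m - l) = m) (Fin.natAdd l ⟨i, h⟩))
              else K₀ ⟨(i : ℕ) - (m - l), by omega⟩) := by
        funext i
        rcases lt_or_ge (i : ℕ) (m - l) with h | h
        · simp only [hLdef, Fin.coe_cast, Fin.coe_natAdd]
          rw [dif_pos (by omega), dif_pos h]
          congr 1
          try ext
          try simp
          try omega
        · simp only [hLdef, Fin.coe_cast, Fin.coe_natAdd]
          rw [dif_neg (by omega), dif_neg (by omega)]
          congr 1
          try ext
          try simp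
          try omega
      rw [eN, mul_comm ((w K₀)⁻¹), mul_assoc, inv_mul_cancel₀ hK₀, mul_one]
    rw [e4, ← mul_assoc] at hL
    exact mul_right_cancel₀ hK₀ hL
  refine ⟨x', ?_, hdec⟩
  have hh := congrArg norm hdec
  rw [norm_castV, norm_tensV, hy, one_mul, hx] at hh
  exact hh.symm

lemma subCuntz_partB {n m l : ℕ} (hlm : l < m)
    (x : Vnm n m) (y : Vnm n l) (hx : ‖x‖ = 1) (hy : ‖y‖ = 1)
    (k : ℕ) (w : Vnm n k) (z : Vnm n (m + k - l)) (hw : ‖w‖ = 1)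
    (heq : tensV w x = castV (by omega : (m + k - l) + l = k + m) (tensV z y)) :
    ∃ x'' : Vnm n (m - l), ‖x''‖ = 1 ∧ x = castV (by omega : (m - l) + l = m) (tensV x'' y) := by
  obtain ⟨K₀, hK₀⟩ : ∃ K, w K ≠ 0 := by
    by_contra hc
    push_neg at hc
    have : w = 0 := PiLp.ext hc
    rw [this, norm_zero] at hw
    norm_num at hw
  set x'' : Vnm n (m - l) := WithLp.toLp 2 fun J' =>
    (w K₀)⁻¹ * z (fun i => if h : (i : ℕ) < k then K₀ ⟨i, h⟩
      else J' ⟨(i : ℕ) - k, by omega⟩) with hx''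
  have hdec : x = castV (by omega : (m - l) + l = m) (tensV x'' y) := by
    refine PiLp.ext fun J => ?_
    set L : Fin (k + m) → Fin n := fun v =>
      if h : (v : ℕ) < k then K₀ ⟨v, h⟩ else J ⟨(v : ℕ) - k, by omega⟩ with hLdef
    have hL := congrFun (congrArg WithLp.ofLp heq) L
    rw [tensV, PiLp.toLp_apply] at hL
    have e1 : (fun i => L (Fin.castAdd m i)) = K₀ := by
      funext i
      simp only [hLdef, Fin.coe_castAdd]
      rw [dif_pos i.isLt]
    have e2 : (fun i => L (Fin.natAdd k i)) = J := by
      funext i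
      simp only [hLdef, Fin.coe_natAdd]
      rw [dif_neg (by omega)]
      congr 1
      try ext
      try simp
      try omega
    rw [e1, e2, castV, tensV] at hL
    simp only [PiLp.toLp_apply] at hL
    rw [castV, tensV]
    simp only [PiLp.toLp_apply]
    have e3 : (fun i => L (Fin.cast (by omega : (m + k - l) + l = k + m) (Fin.natAdd (m + k - l) i)))
        = (fun i : Fin l => J (Fin.cast (by omega : (m - l) + l = m) (Fin.natAdd (m - l) i))) := by
      funext i
      simp only [hLdef, Fin.coe_cast, Fin.coe_natAdd]
      rw [dif_neg (by omega)]
      congr 1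
      try ext
      try simp
      try omega
    rw [e3] at hL
    have e4 : z (fun i => L (Fin.cast (by omega : (m + k - l) + l = k + m) (Fin.castAdd l i)))
        = x'' (fun i : Fin (m - l) => J (Fin.cast (by omega : (m - l) + l = m) (Fin.castAdd l i))) * w K₀ := by
      simp only [hx'', PiLp.toLp_apply]
      have eN : (fun i : Fin (m + k - l) => L (Fin.cast (by omega : (m + k - l) + l = k + m) (Fin.castAdd l i)))
          = (fun i : Fin (m + k - l) => if h : (i : ℕ) < k
              then K₀ ⟨i, h⟩
              else J (Fin.cast (by omega : (m - l) + l = m) (Fin.castAdd l ⟨(i : ℕ) - k, by omega⟩))) := by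
        funext i
        rcases lt_or_ge (i : ℕ) k with h | h
        · simp only [hLdef, Fin.coe_cast, Fin.coe_castAdd]
          rw [dif_pos (by omega), dif_pos h]
        · simp only [hLdef, Fin.coe_cast, Fin.coe_castAdd]
          rw [dif_neg (by omega), dif_neg (by omega)]
          congr 1
          try ext
          try simp
          try omega
      rw [eN, mul_comm ((w K₀)⁻¹), mul_assoc, inv_mul_cancel₀ hK₀, mul_one]
    rw [e4] at hL
    have h5 : w K₀ * x J = w K₀ * ((x'' fun i => J (Fin.cast (by omega : (m - l) + l = m) (Fin.castAdd l i))) *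
        (y fun i => J (Fin.cast (by omega : (m - l) + l = m) (Fin.natAdd (m - l) i)))) := by
      rw [hL]; ring
    exact mul_left_cancel₀ hK₀ h5
  refine ⟨x'', ?_, hdec⟩
  have hh := congrArg norm hdec
  rw [norm_castV, norm_tensV, hy, mul_one, hx] at hh
  exact hh.symm


/-- equidivisibility: for unit vectors `x ∈ V_{n,m}`, `y ∈ V_{n,l}` with
`m > l`: (a) if `x ⊗ w = y ⊗ z` then `x = y ⊗ x'` for some unit vector `x' ∈ V_{n,m−l}`;
(b) if `w ⊗ x = z ⊗ y` then `x = x'' ⊗ y` for some unit vector `x'' ∈ V_{n,m−l}`. -/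
theorem subCuntz_stmt3 {n m l : ℕ} (hn : 2 ≤ n) (hm : 1 ≤ m) (hl : 1 ≤ l) (hlm : l < m)
    (x : Vnm n m) (y : Vnm n l) (hx : ‖x‖ = 1) (hy : ‖y‖ = 1) :
    (∀ (k : ℕ) (w : Vnm n k) (z : Vnm n (m + k - l)), ‖w‖ = 1 → ‖z‖ = 1 →
      tensV x w = castV (by omega : l + (m + k - l) = m + k) (tensV y z) →
      ∃ x' : Vnm n (m - l), ‖x'‖ = 1 ∧ x = castV (by omega : l + (m - l) = m) (tensV y x')) ∧
    (∀ (k : ℕ) (w : Vnm n k) (z : Vnm n (m + k - l)), ‖w‖ = 1 → ‖z‖ = 1 →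
      tensV w x = castV (by omega : (m + k - l) + l = k + m) (tensV z y) →
      ∃ x'' : Vnm n (m - l), ‖x''‖ = 1 ∧ x = castV (by omega : (m - l) + l = m) (tensV x'' y)) := by
  exact ⟨fun k w z hw _ heq => subCuntz_partA hlm x y hx hy k w z hw heq,
    fun k w z hw _ heq => subCuntz_partB hlm x y hx hy k w z hw heq⟩
end
end

section
/- Let n ≥ 2, m ≥ 2, and let X, Y be unit vectors in V_{n,m}. Suppose that for some 1 ≤ a ≤ m−1 there exist a nonzero vector v ∈ V_{n,a} and c ∈ ℂ with |c| = 1 such that v = c · T_{m−a}(conj X) T_a(Y) v, where conj X denotes the coordinatewise complex conjugate of X. Then there exist unit vectors x₁ ∈ V_{n,a} and x₂ ∈ V_{n,m−a} such that X = x₁ ⊗ x₂ and Y = (conj c) x₂ ⊗ x₁. -/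
noncomputable section

/-! ### Auxiliary lemmas for `subCuntz_stmt4` -/

lemma norm_sq_eq' {ι : Type*} [Fintype ι] (z : EuclideanSpace ℂ ι) :
    ‖z‖ ^ 2 = ∑ i, ‖z i‖ ^ 2 := by
  rw [EuclideanSpace.norm_eq, Real.sq_sqrt (by positivity)]

lemma norm_eq_one_of_sq {E : Type*} [NormedAddCommGroup E] (x : E) (h : ‖x‖ ^ 2 = 1) :
    ‖x‖ = 1 := by
  have h0 : (‖x‖ - 1) * (‖x‖ + 1) = 0 := by linear_combination h
  rcases mul_eq_zero.mp h0 with h1 | h1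
  · linarith
  · have := norm_nonneg x; linarith

lemma row_cs {κ : Type*} [Fintype κ] (f w : κ → ℂ) :
    ‖∑ k, f k * w k‖ ^ 2 ≤ (∑ k, ‖f k‖ ^ 2) * ∑ k, ‖w k‖ ^ 2 := by
  set u : EuclideanSpace ℂ κ := WithLp.toLp 2 (fun k => (starRingEnd ℂ) (f k)) with hu
  set w' : EuclideanSpace ℂ κ := WithLp.toLp 2 w with hw'
  have h1 : (inner ℂ u w' : ℂ) = ∑ k, f k * w k := by
    simp [PiLp.inner_apply, hu, hw', RCLike.inner_apply]; exact Finset.sum_congr rfl fun k _ => mul_comm _ _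
  have h2 := norm_inner_le_norm (𝕜 := ℂ) u w'
  rw [h1] at h2
  have h3 : ‖u‖ ^ 2 = ∑ k, ‖f k‖ ^ 2 := by rw [norm_sq_eq']; simp [hu]
  have h4 : ‖w'‖ ^ 2 = ∑ k, ‖w k‖ ^ 2 := norm_sq_eq' w'
  nlinarith [norm_nonneg u, norm_nonneg w', norm_nonneg (∑ k, f k * w k)]

lemma row_cs_eq {κ : Type*} [Fintype κ] (f w : κ → ℂ) (hw : w ≠ 0)
    (h : ‖∑ k, f k * w k‖ ^ 2 = (∑ k, ‖f k‖ ^ 2) * ∑ k, ‖w k‖ ^ 2) :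
    ∃ β : ℂ, ∀ k, f k = β * (starRingEnd ℂ) (w k) := by
  by_cases hf : f = 0
  · exact ⟨0, fun k => by simp [hf]⟩
  set u : EuclideanSpace ℂ κ := WithLp.toLp 2 (fun k => (starRingEnd ℂ) (f k)) with hu
  set w' : EuclideanSpace ℂ κ := WithLp.toLp 2 w with hw'
  have hu0 : u ≠ 0 := by
    intro h0
    apply hf
    funext k
    have : u k = 0 := by simp [h0]
    simpa [hu] using this
  have hw0 : w' ≠ 0 := fun h0 => hw (by simpa [hw'] using congrArg WithLp.ofLp h0)
  have h1 : (inner ℂ u w' : ℂ) = ∑ k, f k * w k := by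
    simp [PiLp.inner_apply, hu, hw', RCLike.inner_apply]; exact Finset.sum_congr rfl fun k _ => mul_comm _ _
  have h3 : ‖u‖ ^ 2 = ∑ k, ‖f k‖ ^ 2 := by rw [norm_sq_eq']; simp [hu]
  have h4 : ‖w'‖ ^ 2 = ∑ k, ‖w k‖ ^ 2 := norm_sq_eq' w'
  have heq : ‖(inner ℂ u w' : ℂ)‖ = ‖u‖ * ‖w'‖ := by
    have hsq : ‖(inner ℂ u w' : ℂ)‖ ^ 2 = (‖u‖ * ‖w'‖) ^ 2 := by
      rw [h1, mul_pow, h3, h4]; exact h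
    nlinarith [norm_nonneg (inner ℂ u w' : ℂ), norm_nonneg u, norm_nonneg w',
      mul_nonneg (norm_nonneg u) (norm_nonneg w')]
  obtain ⟨r, hr0, hrw⟩ := (norm_inner_eq_norm_iff hu0 hw0).mp heq
  refine ⟨(starRingEnd ℂ) r⁻¹, fun k => ?_⟩
  have hwk : w k = r * (starRingEnd ℂ) (f k) := by
    have := congrArg (fun x => x k) hrw
    simpa [hu, hw'] using this
  have hfk : (starRingEnd ℂ) (f k) = r⁻¹ * w k := by field_simp [hwk]; rw [hwk]; ring
  calc f k = (starRingEnd ℂ) ((starRingEnd ℂ) (f k)) := by simp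
    _ = (starRingEnd ℂ) (r⁻¹ * w k) := by rw [hfk]
    _ = (starRingEnd ℂ) r⁻¹ * (starRingEnd ℂ) (w k) := by simp

lemma mat_cs {ι κ : Type*} [Fintype ι] [Fintype κ] (M : ι → κ → ℂ) (w : κ → ℂ) :
    ∑ i, ‖∑ k, M i k * w k‖ ^ 2 ≤ (∑ i, ∑ k, ‖M i k‖ ^ 2) * ∑ k, ‖w k‖ ^ 2 := by
  rw [Finset.sum_mul]
  exact Finset.sum_le_sum fun i _ => row_cs _ _

lemma mat_cs_eq {ι κ : Type*} [Fintype ι] [Fintype κ] (M : ι → κ → ℂ) (w : κ → ℂ) (hw : w ≠ 0)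
    (h : ∑ i, ‖∑ k, M i k * w k‖ ^ 2 = (∑ i, ∑ k, ‖M i k‖ ^ 2) * ∑ k, ‖w k‖ ^ 2) :
    ∃ β : ι → ℂ, ∀ i k, M i k = β i * (starRingEnd ℂ) (w k) := by
  classical
  rw [Finset.sum_mul] at h
  have hterm : ∀ i ∈ Finset.univ (α := ι),
      ‖∑ k, M i k * w k‖ ^ 2 = (∑ k, ‖M i k‖ ^ 2) * ∑ k, ‖w k‖ ^ 2 :=
    (Finset.sum_eq_sum_iff_of_le (fun i _ => row_cs _ _)).mp h
  choose β hβ using fun i => row_cs_eq (M i) w hw (hterm i (Finset.mem_univ i))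
  exact ⟨β, hβ⟩

lemma sum_sq_pos' {α : Type*} [Fintype α] {v : α → ℂ} (hv : v ≠ 0) :
    0 < ∑ J, ‖v J‖ ^ 2 := by
  obtain ⟨J, hJ⟩ := Function.ne_iff.mp hv
  have h0 : 0 < ‖v J‖ := norm_pos_iff.mpr hJ
  exact Finset.sum_pos' (fun i _ => by positivity) ⟨J, Finset.mem_univ J, by positivity⟩

lemma conj_dot {α : Type*} [Fintype α] (v : α → ℂ) :
    ∑ J, (starRingEnd ℂ) (v J) * v J = ((∑ J, ‖v J‖ ^ 2 : ℝ) : ℂ) := by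
  push_cast
  simp [Complex.conj_mul']

lemma core_rank_one {α β : Type*} [Fintype α] [Fintype β]
    (XX : α → β → ℂ) (YY : β → α → ℂ)
    (hX : ∑ J, ∑ K, ‖XX J K‖ ^ 2 = 1) (hY : ∑ K, ∑ J, ‖YY K J‖ ^ 2 = 1)
    (v : α → ℂ) (hv : v ≠ 0) (c : ℂ) (hc : ‖c‖ = 1)
    (heq : ∀ J, v J = c * ∑ K, (starRingEnd ℂ) (XX J K) * (∑ J', YY K J' * v J')) :
    ∃ (x₁ : α → ℂ) (x₂ : β → ℂ), (∑ J, ‖x₁ J‖ ^ 2 = 1) ∧ (∑ K, ‖x₂ K‖ ^ 2 = 1) ∧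
      (∀ J K, XX J K = x₁ J * x₂ K) ∧ (∀ K J, YY K J = (starRingEnd ℂ) c * (x₂ K * x₁ J)) := by
  classical
  set u : β → ℂ := fun K => ∑ J', YY K J' * v J' with hu
  set Sv : ℝ := ∑ J, ‖v J‖ ^ 2 with hSv
  set Su : ℝ := ∑ K, ‖u K‖ ^ 2 with hSu
  have hSv_pos : 0 < Sv := sum_sq_pos' hv
  have hXconj : (∑ J, ∑ K, ‖(starRingEnd ℂ) (XX J K)‖ ^ 2) = 1 := by simpa using hX
  have hSv_eq : Sv = ∑ J, ‖∑ K, (starRingEnd ℂ) (XX J K) * u K‖ ^ 2 := by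
    rw [hSv]
    congr 1
    funext J
    rw [heq J, norm_mul, hc, one_mul]
  have hstep1 : Sv ≤ Su := by
    calc Sv = ∑ J, ‖∑ K, (starRingEnd ℂ) (XX J K) * u K‖ ^ 2 := hSv_eq
      _ ≤ (∑ J, ∑ K, ‖(starRingEnd ℂ) (XX J K)‖ ^ 2) * Su := mat_cs _ _
      _ = Su := by rw [hXconj, one_mul]
  have hstep2 : Su ≤ Sv := by
    calc Su = ∑ K, ‖∑ J', YY K J' * v J'‖ ^ 2 := rfl
      _ ≤ (∑ K, ∑ J', ‖YY K J'‖ ^ 2) * Sv := mat_cs _ _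
      _ = Sv := by rw [hY, one_mul]
  have hSuv : Su = Sv := le_antisymm hstep2 hstep1
  have hSu_pos : 0 < Su := hSuv ▸ hSv_pos
  have hu0 : u ≠ 0 := by
    intro h0
    rw [hSu, h0] at hSu_pos
    simp at hSu_pos
  have e1 : ∑ i, ‖∑ k, (starRingEnd ℂ) (XX i k) * u k‖ ^ 2
      = (∑ i, ∑ k, ‖(starRingEnd ℂ) (XX i k)‖ ^ 2) * ∑ k, ‖u k‖ ^ 2 := by
    rw [hXconj, one_mul, ← hSv_eq, ← hSu]
    exact hSuv.symm
  have e2 : ∑ i, ‖∑ k, YY i k * v k‖ ^ 2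
      = (∑ i, ∑ k, ‖YY i k‖ ^ 2) * ∑ k, ‖v k‖ ^ 2 := by
    rw [hY, one_mul, ← hSv]
    exact hSuv
  obtain ⟨bv, hb⟩ := mat_cs_eq (fun J K => (starRingEnd ℂ) (XX J K)) u hu0 e1
  obtain ⟨ga, hg⟩ := mat_cs_eq YY v hv e2
  have hXXval : ∀ J K, XX J K = (starRingEnd ℂ) (bv J) * u K := by
    intro J K
    have := congrArg (starRingEnd ℂ) (hb J K)
    simpa using this
  have huval : ∀ K, u K = ga K * (Sv : ℂ) := by
    intro K
    calc u K = ∑ J', YY K J' * v J' := rfl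
      _ = ∑ J', ga K * ((starRingEnd ℂ) (v J') * v J') := by
          refine Finset.sum_congr rfl fun J' _ => ?_
          rw [hg K J']; ring
      _ = ga K * ∑ J', (starRingEnd ℂ) (v J') * v J' := by rw [Finset.mul_sum]
      _ = ga K * (Sv : ℂ) := by rw [conj_dot]
  have hvval : ∀ J, v J = c * bv J * (Su : ℂ) := by
    intro J
    calc v J = c * ∑ K, (starRingEnd ℂ) (XX J K) * u K := heq J
      _ = c * ∑ K, bv J * ((starRingEnd ℂ) (u K) * u K) := by
          congr 1
          refine Finset.sum_congr rfl fun K _ => ?_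
          rw [hb J K]; ring
      _ = c * (bv J * ∑ K, (starRingEnd ℂ) (u K) * u K) := by rw [← Finset.mul_sum]
      _ = c * bv J * (Su : ℂ) := by rw [conj_dot]; ring
  set nu : ℝ := Real.sqrt Su with hnu
  have hnu_pos : 0 < nu := Real.sqrt_pos.mpr hSu_pos
  have hnu_sq : nu ^ 2 = Su := Real.sq_sqrt hSu_pos.le
  have hnu_ne : (nu : ℂ) ≠ 0 := by
    simp only [ne_eq, Complex.ofReal_eq_zero]
    exact hnu_pos.ne'
  refine ⟨fun J => (nu : ℂ) * (starRingEnd ℂ) (bv J), fun K => u K / (nu : ℂ), ?_, ?_, ?_, ?_⟩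
  · have hbsum : (∑ J, ‖bv J‖ ^ 2) * Su = 1 := by
      have hprod : ∑ J, ∑ K, ‖XX J K‖ ^ 2 = ∑ J, ∑ K, ‖bv J‖ ^ 2 * ‖u K‖ ^ 2 := by
        refine Finset.sum_congr rfl fun J _ => Finset.sum_congr rfl fun K _ => ?_
        rw [hXXval J K, norm_mul, mul_pow]
        simp
      rw [hprod] at hX
      rw [← hX]
      simp_rw [← Finset.mul_sum, ← hSu]
      rw [← Finset.sum_mul]
    calc ∑ J, ‖(nu : ℂ) * (starRingEnd ℂ) (bv J)‖ ^ 2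
        = ∑ J, nu ^ 2 * ‖bv J‖ ^ 2 := by
          refine Finset.sum_congr rfl fun J _ => ?_
          rw [norm_mul, mul_pow]
          simp [abs_of_pos hnu_pos]
      _ = Su * ∑ J, ‖bv J‖ ^ 2 := by rw [← Finset.mul_sum, hnu_sq]
      _ = 1 := by rw [mul_comm]; exact hbsum
  · calc ∑ K, ‖u K / (nu : ℂ)‖ ^ 2 = ∑ K, ‖u K‖ ^ 2 / nu ^ 2 := by
          refine Finset.sum_congr rfl fun K _ => ?_
          rw [norm_div, div_pow]
          simp [abs_of_pos hnu_pos]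
      _ = Su / Su := by rw [← Finset.sum_div, ← hSu, hnu_sq]
      _ = 1 := div_self hSu_pos.ne'
  · intro J K
    rw [hXXval J K]
    field_simp
  · intro K J
    beta_reduce
    rw [hg K J, hvval J, huval K, map_mul, map_mul, Complex.conj_ofReal]
    have hSuv' : (Su : ℂ) = (Sv : ℂ) := by exact_mod_cast hSuv
    rw [hSuv']
    field_simp

lemma matT_apply {n b a : ℕ} (z : Vnm n (b + a)) (w : EuclideanSpace ℂ (Fin a → Fin n))
    (J : Fin b → Fin n) :
    matT z w J = ∑ K : Fin a → Fin n, z (Fin.append J K) * w K := by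
  simp [matT, Matrix.toEuclideanLin_apply, Matrix.mulVec, dotProduct]

/-- The splitting equivalence `(Fin a → Fin n) × (Fin b → Fin n) ≃ (Fin m → Fin n)`. -/
def fsplit (n : ℕ) {a b m : ℕ} (h : a + b = m) :
    ((Fin a → Fin n) × (Fin b → Fin n)) ≃ (Fin m → Fin n) where
  toFun p := fun i => Fin.append p.1 p.2 (Fin.cast h.symm i)
  invFun L := (fun i => L (Fin.cast h (Fin.castAdd b i)), fun i => L (Fin.cast h (Fin.natAdd a i)))
  left_inv p := by
    ext i
    · simp [Fin.append_left]
    · simp [Fin.append_right]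
  right_inv L := by
    funext i
    have key : ∀ j : Fin (a + b),
        Fin.append (fun t => L (Fin.cast h (Fin.castAdd b t)))
          (fun t => L (Fin.cast h (Fin.natAdd a t))) j = L (Fin.cast h j) := by
      intro j
      induction j using Fin.addCases with
      | left t => rw [Fin.append_left]
      | right t => rw [Fin.append_right]
    have := key (Fin.cast h.symm i)
    simpa using this

lemma sum_fsplit {n a b m : ℕ} (h : a + b = m) (F : (Fin m → Fin n) → ℝ) :
    ∑ J : Fin a → Fin n, ∑ K : Fin b → Fin n, F (fsplit n h (J, K)) = ∑ L, F L := by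
  rw [← Equiv.sum_comp (fsplit n h) F, Fintype.sum_prod_type]

lemma Tmat_apply {n m a : ℕ} (h : a ≤ m) (z : Vnm n m) (w : EuclideanSpace ℂ (Fin a → Fin n))
    (J : Fin (m - a) → Fin n) :
    Tmat a h z w J = ∑ K : Fin a → Fin n,
      z (fun i => Fin.append J K (Fin.cast (by omega : m = (m - a) + a) i)) * w K := by
  rw [Tmat, matT_apply]
  exact Finset.sum_congr rfl fun K _ => rfl

lemma append_cast_eq {n a a' b m : ℕ} (ha : a' = a) (h : m = a + b) (h' : m = a' + b)
    (J : Fin a → Fin n) (K : Fin b → Fin n) :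
    (fun i : Fin m => Fin.append (fun t : Fin a' => J (Fin.cast ha t)) K (Fin.cast h' i))
      = fun i => Fin.append J K (Fin.cast h i) := by
  subst ha
  rfl

lemma castV_Tmat_apply {n m a : ℕ} (h1 : m - a ≤ m) (X : Vnm n m)
    (u : EuclideanSpace ℂ (Fin (m - a) → Fin n))
    (hma : m - (m - a) = a) (hab : a + (m - a) = m) (J : Fin a → Fin n) :
    castV hma (Tmat (m - a) h1 X u) J
      = ∑ K : Fin (m - a) → Fin n, X (fsplit n hab (J, K)) * u K := by
  rw [castV]
  rw [Tmat_apply]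
  refine Finset.sum_congr rfl fun K _ => ?_
  exact congr_arg (· * u K) (congrArg X (append_cast_eq hma hab.symm (by omega) J K))

/-- if `v ≠ 0` satisfies `v = c · T_{m−a}(conj X) T_a(Y) v` with `|c| = 1`,
then `X = x₁ ⊗ x₂` and `Y = (conj c) x₂ ⊗ x₁` for some unit vectors `x₁ ∈ V_{n,a}`,
`x₂ ∈ V_{n,m−a}`. -/
theorem subCuntz_stmt4 {n m a : ℕ} (hn : 2 ≤ n) (hm : 2 ≤ m)
    (ha1 : 1 ≤ a) (ha2 : a ≤ m - 1)
    (X Y : Vnm n m) (hX : ‖X‖ = 1) (hY : ‖Y‖ = 1)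
    (v : Vnm n a) (hv : v ≠ 0) (c : ℂ) (hc : ‖c‖ = 1)
    (heq : v = c • castV (by omega : m - (m - a) = a)
      (Tmat (m - a) (by omega) (conjV X) (Tmat a (by omega) Y v))) :
    ∃ (x₁ : Vnm n a) (x₂ : Vnm n (m - a)), ‖x₁‖ = 1 ∧ ‖x₂‖ = 1 ∧
      X = castV (by omega : a + (m - a) = m) (tensV x₁ x₂) ∧
      Y = (starRingEnd ℂ c) • castV (by omega : (m - a) + a = m) (tensV x₂ x₁) := by
  classical
  have hma : m - (m - a) = a := by omega
  have hab : a + (m - a) = m := by omega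
  have hba : (m - a) + a = m := by omega
  have h2 : m - a ≤ m := by omega
  have h3 : a ≤ m := by omega
  -- coordinate form of the hypothesis
  have key : ∀ J : Fin a → Fin n, v J = c * ∑ K : Fin (m - a) → Fin n,
      (starRingEnd ℂ) (X (fsplit n hab (J, K))) *
        (∑ J' : Fin a → Fin n, Y (fsplit n hba (K, J')) * v J') := by
    intro J
    have h0 : v J = (c • castV hma (Tmat (m - a) h2 (conjV X) (Tmat a h3 Y v))) J :=
      congrArg (fun x => x J) heq
    rw [h0]
    have h1 : (c • castV hma (Tmat (m - a) h2 (conjV X) (Tmat a h3 Y v))) J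
        = c * castV hma (Tmat (m - a) h2 (conjV X) (Tmat a h3 Y v)) J := rfl
    rw [h1, castV_Tmat_apply h2 (conjV X) _ hma hab J]
    refine congrArg (c * ·) (Finset.sum_congr rfl fun K _ => ?_)
    refine congrArg₂ (· * ·) rfl ?_
    rw [Tmat_apply h3 Y v K]
    exact Finset.sum_congr rfl fun J' _ => rfl
  -- norm translations
  have hX2 : ∑ J : Fin a → Fin n, ∑ K : Fin (m - a) → Fin n, ‖X (fsplit n hab (J, K))‖ ^ 2 = 1 := by
    rw [sum_fsplit hab (fun L => ‖X L‖ ^ 2), ← norm_sq_eq' X, hX]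
    norm_num
  have hY2 : ∑ K : Fin (m - a) → Fin n, ∑ J : Fin a → Fin n, ‖Y (fsplit n hba (K, J))‖ ^ 2 = 1 := by
    rw [sum_fsplit hba (fun L => ‖Y L‖ ^ 2), ← norm_sq_eq' Y, hY]
    norm_num
  obtain ⟨x₁, x₂, hn1, hn2, hXf, hYf⟩ :=
    core_rank_one (fun J K => X (fsplit n hab (J, K))) (fun K J => Y (fsplit n hba (K, J)))
      hX2 hY2 v (fun h0 => hv (by simpa using congrArg (WithLp.toLp 2) h0)) c hc key
  refine ⟨WithLp.toLp 2 x₁, WithLp.toLp 2 x₂, ?_, ?_, ?_, ?_⟩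
  · exact norm_eq_one_of_sq (E := Vnm n a) (WithLp.toLp 2 x₁) ((norm_sq_eq' (WithLp.toLp 2 x₁ : Vnm n a)).trans hn1)
  · exact norm_eq_one_of_sq (E := Vnm n (m - a)) (WithLp.toLp 2 x₂) ((norm_sq_eq' (WithLp.toLp 2 x₂ : Vnm n (m - a))).trans hn2)
  · refine PiLp.ext fun L => ?_
    have h := hXf ((fsplit n hab).symm L).1 ((fsplit n hab).symm L).2
    have h2' : fsplit n hab (((fsplit n hab).symm L).1, ((fsplit n hab).symm L).2) = L := by
      simpa using (fsplit n hab).apply_symm_apply L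
    rw [h2'] at h
    exact h
  · refine PiLp.ext fun L => ?_
    have h := hYf ((fsplit n hba).symm L).1 ((fsplit n hba).symm L).2
    have h2' : fsplit n hba (((fsplit n hba).symm L).1, ((fsplit n hba).symm L).2) = L := by
      simpa using (fsplit n hba).apply_symm_apply L
    rw [h2'] at h
    exact h
end
end

section
/- Let n ≥ 2, let x be a unit vector in V_{n,m} and y a unit vector in V_{n,l}, and suppose y ⊗ x = c · (x ⊗ y) for some c ∈ ℂ with |c| = 1. Then there exist a ≥ 1, a unit vector w ∈ V_{n,a}, integers f₁, f₂ ≥ 1, and γ₁, γ₂ ∈ ℂ with |γ₁| = |γ₂| = 1, such that x = γ₁ w^{⊗f₁} and y = γ₂ w^{⊗f₂}. In particular, x ⊗ y is periodic and c = 1. -/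
noncomputable section

namespace SC

def segN {n : ℕ} (f : ℕ → Fin n) (s a : ℕ) : Fin a → Fin n := fun t => f (s + (t : ℕ))

lemma segN_shift {n : ℕ} (f : ℕ → Fin n) (s u a : ℕ) :
    segN (fun k => f (s + k)) u a = segN f (s + u) a :=
  funext fun t => congrArg f (by omega)

lemma segN_congr {n : ℕ} (f : ℕ → Fin n) (a : ℕ) {s s' : ℕ} (h : s = s') :
    segN f s a = segN f s' a := by rw [h]

lemma segN_eq {n : ℕ} {f g : ℕ → Fin n} {s u : ℕ} (a : ℕ)
    (h : ∀ t : ℕ, t < a → f (s + t) = g (u + t)) : segN f s a = segN g u a :=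
  funext fun t => h t t.isLt

lemma segN_eq_fn {n a : ℕ} {f : ℕ → Fin n} {s : ℕ} {A : Fin a → Fin n}
    (h : ∀ t : Fin a, f (s + (t : ℕ)) = A t) : segN f s a = A :=
  funext h

def catW {n a : ℕ} (A : Fin a → Fin n) (g : ℕ → Fin n) : ℕ → Fin n :=
  fun k => if h : k < a then A ⟨k, h⟩ else g (k - a)

lemma catW_lt {n a : ℕ} (A : Fin a → Fin n) (g : ℕ → Fin n) {k : ℕ} (h : k < a) :
    catW A g k = A ⟨k, h⟩ := dif_pos h

lemma catW_ge {n a : ℕ} (A : Fin a → Fin n) (g : ℕ → Fin n) {k : ℕ} (h : a ≤ k) :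
    catW A g k = g (k - a) := dif_neg (by omega)

lemma fapp {n a : ℕ} (A : Fin a → Fin n) {u v : ℕ} {hu : u < a} {hv : v < a} (h : u = v) :
    A ⟨u, hu⟩ = A ⟨v, hv⟩ := by subst h; rfl

lemma catW_segN_lt {n l : ℕ} (f : ℕ → Fin n) (s : ℕ) (g : ℕ → Fin n) {k : ℕ}
    (h : k < l) : catW (segN (n := n) f s l) g k = f (s + k) := catW_lt _ _ h

lemma segN_catW_left {n a : ℕ} (A : Fin a → Fin n) (g : ℕ → Fin n) :
    segN (catW A g) 0 a = A :=
  segN_eq_fn fun t => by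
    rw [catW_lt A g (show 0 + (t : ℕ) < a by omega)]
    exact fapp A (by omega)

lemma segN_catW_right {n a : ℕ} (A : Fin a → Fin n) (g : ℕ → Fin n) (b : ℕ) :
    segN (catW A g) a b = segN g 0 b :=
  segN_eq b fun t ht => by
    rw [catW_ge A g (show a ≤ a + t by omega)]
    exact congrArg g (by omega)

lemma segN_catW_mid {n a b : ℕ} (A : Fin a → Fin n) (B : Fin b → Fin n) (g : ℕ → Fin n) :
    segN (catW A (catW B g)) a b = B := by
  rw [segN_catW_right, segN_catW_left]

lemma sum_sq_eq_one {n m : ℕ} {z : Vnm n m} (hz : ‖z‖ = 1) :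
    ∑ J : Fin m → Fin n, ‖z J‖ ^ 2 = 1 := by
  have h := EuclideanSpace.norm_eq z
  rw [hz] at h
  have h2 := congrArg (fun t : ℝ => t ^ 2) h
  simp only [one_pow] at h2
  rw [Real.sq_sqrt (Finset.sum_nonneg fun i _ => by positivity)] at h2
  exact h2.symm

lemma norm_eq_one_of_sum {n m : ℕ} {z : Vnm n m} (hz : ∑ J : Fin m → Fin n, ‖z J‖ ^ 2 = 1) :
    ‖z‖ = 1 := by
  rw [EuclideanSpace.norm_eq, hz, Real.sqrt_one]

lemma exists_ne_zero {n m : ℕ} {z : Vnm n m} (hz : ‖z‖ = 1) : ∃ J, z J ≠ 0 := by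
  by_contra h
  push_neg at h
  have hz0 : z = 0 := PiLp.ext h
  rw [hz0, norm_zero] at hz
  norm_num at hz

def splitE {n : ℕ} (m b l : ℕ) (h : m + b = l) :
    (Fin l → Fin n) ≃ (Fin m → Fin n) × (Fin b → Fin n) where
  toFun J := (fun t => J ⟨t, by omega⟩, fun t => J ⟨m + t, by omega⟩)
  invFun P := fun i => if h' : (i : ℕ) < m then P.1 ⟨i, h'⟩ else P.2 ⟨(i : ℕ) - m, by omega⟩
  left_inv J := by
    funext i
    by_cases h' : (i : ℕ) < m
    · simp only [dif_pos h']
    · simp only [dif_neg h']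
      exact congrArg J (Fin.ext (show m + ((i:ℕ) - m) = (i:ℕ) by omega))
  right_inv P := by
    refine Prod.ext ?_ ?_
    · funext t
      simp only [dif_pos t.isLt]
    · funext t
      have h1 : ¬ (m + (t : ℕ) < m) := by omega
      simp only [dif_neg h1]
      refine congrArg P.2 (Fin.ext ?_)
      show m + (t:ℕ) - m = (t:ℕ)
      omega

lemma sum_split {n : ℕ} (m b l : ℕ) (h : m + b = l) (F : (Fin l → Fin n) → ℝ) :
    ∑ J : Fin l → Fin n, F J =
      ∑ A : Fin m → Fin n, ∑ B : Fin b → Fin n, F ((splitE m b l h).symm (A, B)) := by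
  rw [← (splitE m b l h).symm.sum_comp F, Fintype.sum_prod_type]

lemma step {n m l : ℕ} (hn : 0 < n) (hm : 1 ≤ m) (hml : m < l)
    (x : Vnm n m) (y : Vnm n l) (c : ℂ) (hx : ‖x‖ = 1) (hy : ‖y‖ = 1)
    (rel : ∀ f : ℕ → Fin n, y (segN f 0 l) * x (segN f l m) =
      c * (x (segN f 0 m) * y (segN f m l))) :
    ∃ yh : Vnm n (l - m), ‖yh‖ = 1 ∧
      (∀ f : ℕ → Fin n, y (segN f 0 l) = x (segN f 0 m) * yh (segN f m (l - m))) ∧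
      (∀ f : ℕ → Fin n, yh (segN f 0 (l - m)) * x (segN f (l - m) m) =
        c * (x (segN f 0 m) * yh (segN f m (l - m)))) := by
  obtain ⟨J₀, hJ₀⟩ := exists_ne_zero hx
  set d : ℕ → Fin n := fun _ => ⟨0, hn⟩ with hd
  set g₀ : ℕ → Fin n := catW J₀ d with hg₀
  set yh : Vnm n (l - m) := WithLp.toLp 2 fun K => c * y (segN (catW K g₀) 0 l) * (x J₀)⁻¹ with hyh
  have claim1 : ∀ f : ℕ → Fin n,
      y (segN f 0 l) = x (segN f 0 m) * yh (segN f m (l - m)) := by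
    intro f
    have e1 : segN (catW (segN f 0 l) g₀) 0 l = segN f 0 l :=
      segN_eq l fun t ht => by
        rw [catW_segN_lt f 0 g₀ (show 0 + t < l by omega)]
        exact congrArg f (by omega)
    have e2 : segN (catW (segN f 0 l) g₀) l m = J₀ :=
      segN_eq_fn fun t => by
        rw [catW_ge _ _ (show l ≤ l + (t:ℕ) by omega), hg₀,
          catW_lt J₀ d (show l + (t:ℕ) - l < m by omega)]
        exact fapp J₀ (by omega)
    have e3 : segN (catW (segN f 0 l) g₀) 0 m = segN f 0 m :=
      segN_eq m fun t ht => by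
        rw [catW_segN_lt f 0 g₀ (show 0 + t < l by omega)]
        exact congrArg f (by omega)
    have e4 : segN (catW (segN f 0 l) g₀) m l = segN (catW (segN f m (l - m)) g₀) 0 l :=
      segN_eq l fun t ht => by
        by_cases h' : t < l - m
        · rw [catW_segN_lt f 0 g₀ (show m + t < l by omega),
            catW_segN_lt f m g₀ (show 0 + t < l - m by omega)]
          exact congrArg f (by omega)
        · rw [catW_ge _ g₀ (show l ≤ m + t by omega),
            catW_ge _ g₀ (show l - m ≤ 0 + t by omega)]
          exact congrArg g₀ (by omega)
    have hr := rel (catW (segN f 0 l) g₀)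
    rw [e1, e2, e3, e4] at hr
    have hy' : yh (segN f m (l - m)) =
        c * y (segN (catW (segN f m (l - m)) g₀) 0 l) * (x J₀)⁻¹ := rfl
    rw [hy']
    field_simp
    linear_combination hr
  refine ⟨yh, ?_, claim1, ?_⟩
  · -- norm
    apply norm_eq_one_of_sum
    have h1 := sum_sq_eq_one hy
    rw [sum_split m (l - m) l (by omega) (fun J => ‖y J‖ ^ 2)] at h1
    have key : ∀ (A : Fin m → Fin n) (B : Fin (l - m) → Fin n),
        y ((splitE m (l - m) l (by omega)).symm (A, B)) = x A * yh B := by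
      intro A B
      have h2 := claim1 (catW A (catW B g₀))
      have s1 : segN (catW A (catW B g₀)) 0 l = (splitE m (l - m) l (by omega)).symm (A, B) := by
        apply segN_eq_fn
        intro i
        show catW A (catW B g₀) (0 + (i:ℕ)) =
          if h' : (i : ℕ) < m then A ⟨i, h'⟩ else B ⟨(i : ℕ) - m, by omega⟩
        by_cases h' : (i : ℕ) < m
        · rw [dif_pos h', catW_lt A _ (show 0 + (i:ℕ) < m by omega)]
          exact fapp A (by omega)
        · rw [dif_neg h', catW_ge A _ (show m ≤ 0 + (i:ℕ) by omega),
            catW_lt B _ (show 0 + (i:ℕ) - m < l - m by omega)]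
          exact fapp B (by omega)
      have s2 : segN (catW A (catW B g₀)) 0 m = A := segN_catW_left A _
      have s3 : segN (catW A (catW B g₀)) m (l - m) = B := segN_catW_mid A B g₀
      rw [s1, s2, s3] at h2
      exact h2
    have h3 : ∀ (A : Fin m → Fin n) (B : Fin (l - m) → Fin n),
        ‖y ((splitE m (l - m) l (by omega : m + (l-m) = l)).symm (A, B))‖ ^ 2
          = ‖x A‖ ^ 2 * ‖yh B‖ ^ 2 := by
      intro A B
      rw [key A B, norm_mul, mul_pow]
    calc ∑ B : Fin (l-m) → Fin n, ‖yh B‖ ^ 2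
        = (∑ A : Fin m → Fin n, ‖x A‖ ^ 2) * ∑ B : Fin (l-m) → Fin n, ‖yh B‖ ^ 2 := by
          rw [sum_sq_eq_one hx, one_mul]
      _ = ∑ A : Fin m → Fin n, ∑ B : Fin (l-m) → Fin n, ‖x A‖ ^ 2 * ‖yh B‖ ^ 2 := by
          rw [Finset.sum_mul]
          exact Finset.sum_congr rfl fun A _ => by rw [Finset.mul_sum]
      _ = 1 := by
          rw [← h1]
          exact (Finset.sum_congr rfl fun A _ => Finset.sum_congr rfl fun B _ =>
            (h3 A B).symm)
  · -- new relation
    intro f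
    have e1 : segN (catW J₀ f) 0 m = J₀ := segN_catW_left J₀ f
    have e2 : segN (catW J₀ f) m (l - m) = segN f 0 (l - m) := by
      rw [segN_catW_right]
    have e3 : segN (catW J₀ f) l m = segN f (l - m) m :=
      segN_eq m fun t ht => by
        rw [catW_ge J₀ f (show m ≤ l + t by omega)]
        exact congrArg f (by omega)
    have e4 : segN (catW J₀ f) m l = segN f 0 l := by
      rw [segN_catW_right]
    have hr := rel (catW J₀ f)
    rw [e1, e3, e4] at hr
    have hc1 := claim1 (catW J₀ f)
    rw [e1, e2] at hc1
    have hc2 := claim1 f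
    rw [hc1, hc2] at hr
    have hr2 : x J₀ * (yh (segN f 0 (l - m)) * x (segN f (l - m) m)) =
        x J₀ * (c * (x (segN f 0 m) * yh (segN f m (l - m)))) := by
      linear_combination hr
    exact mul_left_cancel₀ hJ₀ hr2

lemma rep_comb {n a m l' f₁ f₂ : ℕ} {l : ℕ} (h₁ : f₁ * a = m)
    (w : Vnm n a) (x : Vnm n m) (yh : Vnm n l') (y : Vnm n l) (γ₁ γ₂ : ℂ)
    (hx' : ∀ f : ℕ → Fin n, x (segN f 0 m) = γ₁ * ∏ i : Fin f₁, w (segN f ((i:ℕ) * a) a))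
    (hy' : ∀ f : ℕ → Fin n, yh (segN f 0 l') = γ₂ * ∏ i : Fin f₂, w (segN f ((i:ℕ) * a) a))
    (hsplit : ∀ f : ℕ → Fin n, y (segN f 0 l) = x (segN f 0 m) * yh (segN f m l')) :
    ∀ f : ℕ → Fin n,
      y (segN f 0 l) = (γ₁ * γ₂) * ∏ i : Fin (f₁ + f₂), w (segN f ((i:ℕ) * a) a) := by
  intro f
  have h2 := hy' (fun k => f (m + k))
  have h3 : (∏ i : Fin f₂, w (segN (fun k => f (m + k)) ((i:ℕ) * a) a))
      = ∏ i : Fin f₂, w (segN f (m + (i:ℕ) * a) a) :=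
    Finset.prod_congr rfl fun i _ => congrArg w (segN_shift f m _ a)
  rw [segN_shift f m 0 l', Nat.add_zero, h3] at h2
  rw [hsplit f, hx' f, h2]
  rw [Fin.prod_univ_add]
  simp only [Fin.coe_castAdd, Fin.coe_natAdd]
  rw [show (∏ j : Fin f₂, w (segN f ((f₁ + (j:ℕ)) * a) a))
      = ∏ j : Fin f₂, w (segN f (m + (j:ℕ) * a) a) from
    Finset.prod_congr rfl fun j _ => congrArg w (segN_congr f a (by rw [← h₁]; ring))]
  ring

lemma key {n : ℕ} (hn : 0 < n) :
    ∀ k m l : ℕ, m + l = k → 1 ≤ m → 1 ≤ l →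
    ∀ (x : Vnm n m) (y : Vnm n l) (c : ℂ), ‖x‖ = 1 → ‖y‖ = 1 → ‖c‖ = 1 →
    (∀ f : ℕ → Fin n, y (segN f 0 l) * x (segN f l m) =
      c * (x (segN f 0 m) * y (segN f m l))) →
    c = 1 ∧ ∃ (a f₁ f₂ : ℕ) (w : Vnm n a) (γ₁ γ₂ : ℂ),
      f₁ * a = m ∧ f₂ * a = l ∧ 1 ≤ a ∧ ‖w‖ = 1 ∧ 1 ≤ f₁ ∧ 1 ≤ f₂ ∧
      ‖γ₁‖ = 1 ∧ ‖γ₂‖ = 1 ∧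
      (∀ f : ℕ → Fin n, x (segN f 0 m) = γ₁ * ∏ i : Fin f₁, w (segN f ((i:ℕ) * a) a)) ∧
      (∀ f : ℕ → Fin n, y (segN f 0 l) = γ₂ * ∏ i : Fin f₂, w (segN f ((i:ℕ) * a) a)) := by
  intro k
  induction k using Nat.strong_induction_on with
  | _ k IH =>
  intro m l hk hm hl x y c hx hy hc rel
  have hc0 : c ≠ 0 := by
    intro h; rw [h, norm_zero] at hc; norm_num at hc
  rcases lt_trichotomy m l with hlt | heq | hgt
  · -- m < l
    obtain ⟨yh, hyh1, hsplit, rel'⟩ := step hn hm hlt x y c hx hy rel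
    have hll : 1 ≤ l - m := by omega
    obtain ⟨hc1, a, f₁, f₂, w, γ₁, γ₂, h₁, h₂, ha, hw, hf₁, hf₂, hγ₁, hγ₂, hxr, hyr⟩ :=
      IH (m + (l - m)) (by omega) m (l - m) rfl hm hll x yh c hx hyh1 hc rel'
    refine ⟨hc1, a, f₁, f₁ + f₂, w, γ₁, γ₁ * γ₂, h₁, by
      rw [Nat.add_mul]; omega, ha, hw, hf₁, by omega, hγ₁, by
      rw [norm_mul, hγ₁, hγ₂]; norm_num, hxr, ?_⟩
    exact rep_comb h₁ w x yh y γ₁ γ₂ hxr hyr hsplit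
  · -- m = l
    subst heq
    set d : ℕ → Fin n := fun _ => ⟨0, hn⟩ with hd
    have pair : ∀ (K J : Fin m → Fin n), y K * x J = c * (x K * y J) := by
      intro K J
      have hr := rel (catW K (catW J d))
      have e1 : segN (catW K (catW J d)) 0 m = K := segN_catW_left K _
      have e2 : segN (catW K (catW J d)) m m = J := segN_catW_mid K J d
      rw [e1, e2] at hr
      exact hr
    obtain ⟨J₀, hJ₀⟩ := exists_ne_zero hx
    set γ : ℂ := c * y J₀ * (x J₀)⁻¹ with hγ
    have hyx : ∀ K, y K = γ * x K := by
      intro K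
      have h1 := pair K J₀
      rw [hγ]
      field_simp
      linear_combination h1
    have hysm : y = γ • x := PiLp.ext fun K => by rw [PiLp.smul_apply]; exact hyx K
    have hγn : ‖γ‖ = 1 := by
      have : ‖y‖ = ‖γ‖ * ‖x‖ := by rw [hysm, norm_smul]
      rw [hy, hx, mul_one] at this
      exact this.symm
    have hγ0 : γ ≠ 0 := by
      intro h; rw [h, norm_zero] at hγn; norm_num at hγn
    have hc1 : c = 1 := by
      have h1 := pair J₀ J₀
      rw [hyx J₀] at h1
      have h2 : (γ * x J₀ * x J₀) * 1 = (γ * x J₀ * x J₀) * c := by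
        linear_combination h1
      have h3 := mul_left_cancel₀ (by
        exact mul_ne_zero (mul_ne_zero hγ0 hJ₀) hJ₀) h2
      exact h3.symm
    refine ⟨hc1, m, 1, 1, x, 1, γ, one_mul m, one_mul m, hm, hx, le_refl 1, le_refl 1,
      norm_one, hγn, ?_, ?_⟩
    · intro f
      have hp : ∏ i : Fin 1, x (segN f ((i:ℕ) * m) m) = x (segN f 0 m) := by
        rw [Fin.prod_univ_one]
        exact congrArg x (segN_congr f m (by simp))
      rw [hp, one_mul]
    · intro f
      have hp : ∏ i : Fin 1, x (segN f ((i:ℕ) * m) m) = x (segN f 0 m) := by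
        rw [Fin.prod_univ_one]
        exact congrArg x (segN_congr f m (by simp))
      rw [hp, hyx (segN f 0 m)]
  · -- l < m
    have hcinv : ‖c⁻¹‖ = 1 := by rw [norm_inv, hc]; norm_num
    have rel2 : ∀ f : ℕ → Fin n, x (segN f 0 m) * y (segN f m l) =
        c⁻¹ * (y (segN f 0 l) * x (segN f l m)) := by
      intro f
      have h1 := rel f
      field_simp
      linear_combination -h1
    obtain ⟨xh, hxh1, hsplit, rel'⟩ := step hn hl hgt y x c⁻¹ hy hx rel2
    have hll : 1 ≤ m - l := by omega
    obtain ⟨hc1, a, f₁, f₂, w, γ₁, γ₂, h₁, h₂, ha, hw, hf₁, hf₂, hγ₁, hγ₂, hyr, hxhr⟩ :=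
      IH (l + (m - l)) (by omega) l (m - l) rfl hl hll y xh c⁻¹ hy hxh1 hcinv rel'
    have hcc : c = 1 := by
      have := inv_eq_one.mp hc1
      exact this
    refine ⟨hcc, a, f₁ + f₂, f₁, w, γ₁ * γ₂, γ₁, by
      rw [Nat.add_mul]; omega, h₁, ha, hw, by omega, hf₁, by
      rw [norm_mul, hγ₁, hγ₂]; norm_num, hγ₁, ?_, hyr⟩
    exact rep_comb h₁ w y xh x γ₁ γ₂ hyr hxhr hsplit

lemma castV_tpow_apply {n a p N : ℕ} (hn : 0 < n) (hpa : p * a = N) (u : Vnm n a)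
    (J : Fin N → Fin n) :
    castV hpa (tpowV u p) J
      = ∏ i : Fin p, u (segN (catW J (fun _ => ⟨0, hn⟩)) ((i:ℕ) * a) a) := by
  simp only [castV, tpowV, PiLp.toLp_apply]
  refine Finset.prod_congr rfl fun i _ => congrArg u (funext fun t => ?_)
  have hlt : (i:ℕ) * a + (t:ℕ) < N := by
    have h5 : ((i:ℕ) + 1) * a ≤ p * a := Nat.mul_le_mul_right a i.isLt
    have h6 : ((i:ℕ) + 1) * a = (i:ℕ) * a + a := by ring
    have h7 : (t : ℕ) < a := t.isLt
    omega
  show J (Fin.cast hpa ⟨(i:ℕ) * a + (t:ℕ), _⟩) = catW J (fun _ => ⟨0, hn⟩) ((i:ℕ) * a + (t:ℕ))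
  rw [catW_lt J _ hlt]
  refine congrArg J (Fin.ext ?_)
  simp

lemma rep_to_vec {n a m f₁ : ℕ} (hn : 0 < n) (h₁ : f₁ * a = m) (w : Vnm n a) (x : Vnm n m)
    (γ : ℂ)
    (hrep : ∀ f : ℕ → Fin n, x (segN f 0 m) = γ * ∏ i : Fin f₁, w (segN f ((i:ℕ) * a) a)) :
    x = γ • castV h₁ (tpowV w f₁) := by
  refine PiLp.ext fun J => ?_
  have hf := hrep (catW J (fun _ => ⟨0, hn⟩))
  rw [segN_catW_left] at hf
  have hsm : (γ • castV h₁ (tpowV w f₁)) J = γ * castV h₁ (tpowV w f₁) J := rfl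
  rw [hsm, castV_tpow_apply hn h₁ w J]
  exact hf

lemma rep_to_pow {n a N p : ℕ} (hn : 0 < n) (hpa : p * a = N) (w : Vnm n a) (z : Vnm n N)
    (δ ρ : ℂ) (hρ : ρ ^ p = δ)
    (hrep : ∀ f : ℕ → Fin n, z (segN f 0 N) = δ * ∏ i : Fin p, w (segN f ((i:ℕ) * a) a)) :
    castV hpa (tpowV (ρ • w) p) = z := by
  refine PiLp.ext fun J => ?_
  have hf := hrep (catW J (fun _ => ⟨0, hn⟩))
  rw [segN_catW_left] at hf
  rw [castV_tpow_apply hn hpa (ρ • w) J, hf]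
  have e1 : (∏ i : Fin p, (ρ • w) (segN (catW J (fun _ => ⟨0, hn⟩)) ((i:ℕ) * a) a))
      = ∏ i : Fin p, ρ * w (segN (catW J (fun _ => ⟨0, hn⟩)) ((i:ℕ) * a) a) := rfl
  rw [e1, Finset.prod_mul_distrib, Finset.prod_const, Finset.card_univ, Fintype.card_fin, hρ]

lemma tensV_split {n m l : ℕ} (x : Vnm n m) (y : Vnm n l) :
    ∀ f : ℕ → Fin n, (tensV x y) (segN f 0 (m + l)) = x (segN f 0 m) * y (segN f m l) := by
  intro f
  have e1 : (fun i : Fin m => segN f 0 (m + l) (Fin.castAdd l i)) = segN f 0 m :=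
    funext fun i => congrArg f (by simp only [Fin.coe_castAdd])
  have e2 : (fun i : Fin l => segN f 0 (m + l) (Fin.natAdd m i)) = segN f m l :=
    funext fun i => congrArg f (by simp only [Fin.coe_natAdd]; omega)
  show x (fun i => segN f 0 (m + l) (Fin.castAdd l i))
      * y (fun i => segN f 0 (m + l) (Fin.natAdd m i)) = _
  rw [e1, e2]

lemma heq_to_rel {n m l : ℕ} (x : Vnm n m) (y : Vnm n l) (c : ℂ) (hml : m + l = l + m)
    (heq : tensV y x = c • castV hml (tensV x y)) :
    ∀ f : ℕ → Fin n, y (segN f 0 l) * x (segN f l m)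
      = c * (x (segN f 0 m) * y (segN f m l)) := by
  intro f
  have h0 : tensV y x (segN f 0 (l + m)) = (c • castV hml (tensV x y)) (segN f 0 (l + m)) := by
    rw [heq]
  rw [tensV_split y x f] at h0
  have hsm : (c • castV hml (tensV x y)) (segN f 0 (l + m))
      = c * castV hml (tensV x y) (segN f 0 (l + m)) := rfl
  have hcast : castV hml (tensV x y) (segN f 0 (l + m)) = tensV x y (segN f 0 (m + l)) :=
    by simp only [castV, PiLp.toLp_apply]; exact congrArg (tensV x y) (funext fun i => congrArg f (by simp))
  rw [hsm, hcast, tensV_split x y f] at h0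
  exact h0

end SC

/-- if `y ⊗ x = c · (x ⊗ y)` with `|c| = 1`, then `x` and `y` are
powers of a common unit vector `w` up to phases; in particular `x ⊗ y` is periodic
and `c = 1`. -/
theorem subCuntz_stmt6 {n m l : ℕ} (hn : 2 ≤ n) (hm : 1 ≤ m) (hl : 1 ≤ l)
    (x : Vnm n m) (y : Vnm n l) (hx : ‖x‖ = 1) (hy : ‖y‖ = 1)
    (c : ℂ) (hc : ‖c‖ = 1)
    (heq : tensV y x = c • castV (by omega : m + l = l + m) (tensV x y)) :
    (∃ (a : ℕ) (w : Vnm n a) (f₁ f₂ : ℕ) (γ₁ γ₂ : ℂ)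
        (h₁ : f₁ * a = m) (h₂ : f₂ * a = l),
      1 ≤ a ∧ ‖w‖ = 1 ∧ 1 ≤ f₁ ∧ 1 ≤ f₂ ∧ ‖γ₁‖ = 1 ∧ ‖γ₂‖ = 1 ∧
      x = γ₁ • castV h₁ (tpowV w f₁) ∧ y = γ₂ • castV h₂ (tpowV w f₂)) ∧
    PeriodicV (tensV x y) ∧ c = 1 := by
  open SC in
  have hn0 : 0 < n := by omega
  have rel := heq_to_rel x y c (by omega) heq
  obtain ⟨hc1, a, f₁, f₂, w, γ₁, γ₂, h₁, h₂, ha, hw, hf₁, hf₂, hγ₁, hγ₂, hxr, hyr⟩ :=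
    key hn0 (m + l) m l rfl hm hl x y c hx hy hc rel
  refine ⟨⟨a, w, f₁, f₂, γ₁, γ₂, h₁, h₂, ha, hw, hf₁, hf₂, hγ₁, hγ₂,
    rep_to_vec hn0 h₁ w x γ₁ hxr, rep_to_vec hn0 h₂ w y γ₂ hyr⟩, ?_, hc1⟩
  have hcomb := rep_comb h₁ w x y (tensV x y) γ₁ γ₂ hxr hyr (tensV_split x y)
  obtain ⟨ρ, hρ⟩ := IsAlgClosed.exists_pow_nat_eq (γ₁ * γ₂) (show 0 < f₁ + f₂ by omega)
  have hρ1 : ‖ρ‖ = 1 := by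
    have h3 : ‖ρ‖ ^ (f₁ + f₂) = 1 := by
      rw [← norm_pow, hρ, norm_mul, hγ₁, hγ₂, mul_one]
    rcases lt_trichotomy ‖ρ‖ 1 with h | h | h
    · exfalso
      have := pow_lt_one₀ (norm_nonneg ρ) h (show f₁ + f₂ ≠ 0 by omega)
      rw [h3] at this
      exact lt_irrefl 1 this
    · exact h
    · exfalso
      have := one_lt_pow₀ h (show f₁ + f₂ ≠ 0 by omega)
      rw [h3] at this
      exact lt_irrefl 1 this
  refine ⟨a, f₁ + f₂, ρ • w, by rw [Nat.add_mul]; omega, ?_, by omega,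
    rep_to_pow hn0 _ w (tensV x y) (γ₁ * γ₂) ρ hρ hcomb⟩
  rw [norm_smul, hρ1, hw, mul_one]
end
end

section
/- Let n ≥ 2, let x be a unit vector in V_{n,m} and y a unit vector in V_{n,l}, and suppose x^{⊗α} = y^{⊗β} for some integers α, β ≥ 1. Then there exist a unit vector w, integers k₁, k₂ ≥ 1, and γ₁, γ₂ ∈ ℂ with |γ₁| = |γ₂| = 1, such that x = γ₁ w^{⊗k₁} and y = γ₂ w^{⊗k₂}. In particular: if m > l, then x is periodic; and if x is nonperiodic, then y = c x^{⊗d} for some d ≥ 1 and c ∈ ℂ with |c| = 1. -/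
noncomputable section

namespace SubCuntz7

variable {n : ℕ}

/-- shift of an infinite index sequence -/
def shf (k : ℕ) (f : ℕ → Fin n) : ℕ → Fin n := fun i => f (k + i)

/-- evaluation of a degree-`m` tensor on an infinite sequence (uses first `m` entries) -/
def Ev {m : ℕ} (z : Vnm n m) (f : ℕ → Fin n) : ℂ := z (fun i => f i)

lemma shf_shf (a b : ℕ) (f : ℕ → Fin n) : shf a (shf b f) = shf (b + a) f := by
  funext i; unfold shf; congr 1; omega

lemma shf_zero (f : ℕ → Fin n) : shf 0 f = f := by
  funext i; unfold shf; congr 1; omega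

def pad (m : ℕ) (J : Fin m → Fin n) (g : ℕ → Fin n) : ℕ → Fin n :=
  fun i => if h : i < m then J ⟨i, h⟩ else g (i - m)

lemma Ev_pad {m : ℕ} (z : Vnm n m) (J : Fin m → Fin n) (g : ℕ → Fin n) :
    Ev z (pad m J g) = z J := by
  unfold Ev pad
  refine congrArg (fun J => z J) ?_
  funext i
  rw [dif_pos i.isLt]

lemma shf_pad {m : ℕ} (J : Fin m → Fin n) (g : ℕ → Fin n) : shf m (pad m J g) = g := by
  funext i
  unfold shf pad
  rw [dif_neg (by omega)]
  congr 1
  omega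

def per (m : ℕ) (hm : 0 < m) (J : Fin m → Fin n) : ℕ → Fin n :=
  fun i => J ⟨i % m, Nat.mod_lt _ hm⟩

lemma Ev_per {m : ℕ} (hm : 0 < m) (z : Vnm n m) (J : Fin m → Fin n) :
    Ev z (per m hm J) = z J := by
  unfold Ev per
  refine congrArg (fun J => z J) ?_
  funext i
  congr 1
  exact Fin.ext (Nat.mod_eq_of_lt i.isLt)

lemma shf_mul_per {m : ℕ} (hm : 0 < m) (J : Fin m → Fin n) (k : ℕ) :
    shf (k * m) (per m hm J) = per m hm J := by
  funext i
  unfold shf per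
  congr 1
  exact Fin.ext (show (k*m+i)%m = i%m by rw [Nat.add_comm]; exact Nat.add_mul_mod_self_right i k m)

lemma exists_coord_ne_zero {m : ℕ} {x : Vnm n m} (hx : ‖x‖ = 1) : ∃ J, x J ≠ 0 := by
  by_contra h
  push_neg at h
  have hx0 : x = 0 := by
    apply PiLp.ext; intro J
    simpa using h J
  rw [hx0] at hx
  simp at hx

lemma ev_inj {m : ℕ} (hn : 0 < n) {z z' : Vnm n m} (h : ∀ f, Ev z f = Ev z' f) : z = z' := by
  apply PiLp.ext; intro J
  have := h (pad m J (fun _ => ⟨0, hn⟩))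
  rwa [Ev_pad, Ev_pad] at this

lemma Ev_castV {m m' : ℕ} (h : m = m') (z : Vnm n m) (f : ℕ → Fin n) :
    Ev (castV h z) f = Ev z f := rfl

lemma Ev_tensV {m l : ℕ} (x : Vnm n m) (y : Vnm n l) (f : ℕ → Fin n) :
    Ev (tensV x y) f = Ev x f * Ev y (shf m f) := rfl

lemma Ev_smul {m : ℕ} (c : ℂ) (z : Vnm n m) (f : ℕ → Fin n) :
    Ev (c • z) f = c * Ev z f := rfl

def EPow (a : ℕ) (w : Vnm n a) (k : ℕ) (f : ℕ → Fin n) : ℂ :=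
  ∏ i : Fin k, Ev w (shf ((i : ℕ) * a) f)

lemma Ev_tpow {a : ℕ} (w : Vnm n a) (k : ℕ) (f : ℕ → Fin n) :
    Ev (tpowV w k) f = EPow a w k f := rfl

end SubCuntz7
namespace SubCuntz7

variable {n : ℕ}

lemma shf_congr {a b : ℕ} (f : ℕ → Fin n) (h : a = b) : shf a f = shf b f := by rw [h]

lemma EPow_one (a : ℕ) (w : Vnm n a) (f : ℕ → Fin n) : EPow a w 1 f = Ev w f := by
  simp only [EPow, Fin.prod_univ_one, Fin.val_zero, Nat.zero_mul, shf_zero]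

lemma EPow_succ (a : ℕ) (w : Vnm n a) (k : ℕ) (f : ℕ → Fin n) :
    EPow a w (k + 1) f = Ev w f * EPow a w k (shf a f) := by
  rw [EPow, Fin.prod_univ_succ]
  congr 1
  · rw [Fin.val_zero, Nat.zero_mul, shf_zero]
  · rw [EPow]
    apply Finset.prod_congr rfl
    intro i _
    congr 1
    rw [shf_shf]
    apply shf_congr
    simp [Fin.val_succ]
    ring

lemma EPow_add (a : ℕ) (w : Vnm n a) (k k' : ℕ) (f : ℕ → Fin n) :
    EPow a w (k + k') f = EPow a w k f * EPow a w k' (shf (k * a) f) := by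
  simp only [EPow]
  rw [Fin.prod_univ_add]
  refine congrArg₂ (· * ·) (Finset.prod_congr rfl fun i _ => rfl)
    (Finset.prod_congr rfl fun i _ => ?_)
  rw [shf_shf]
  congr 1
  apply shf_congr
  simp [Fin.coe_natAdd]
  ring

lemma EPow_succ_last (a : ℕ) (w : Vnm n a) (k : ℕ) (f : ℕ → Fin n) :
    EPow a w (k + 1) f = EPow a w k f * Ev w (shf (k * a) f) := by
  rw [EPow_add, EPow_one]

lemma EPow_per {m : ℕ} (hm : 0 < m) (z : Vnm n m) (A : Fin m → Fin n) (k : ℕ) :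
    EPow m z k (per m hm A) = (z A) ^ k := by
  have hc : ∀ i : Fin k, Ev z (shf ((i : ℕ) * m) (per m hm A)) = z A := by
    intro i
    rw [shf_mul_per, Ev_per]
  rw [EPow, Finset.prod_congr rfl (fun i _ => hc i)]
  simp

lemma EPow_smul (a : ℕ) (w : Vnm n a) (c : ℂ) (k : ℕ) (f : ℕ → Fin n) :
    EPow a (c • w) k f = c ^ k * EPow a w k f := by
  rw [EPow, EPow]
  rw [Finset.prod_congr rfl (fun (i : Fin k) _ => Ev_smul c w _)]
  rw [Finset.prod_mul_distrib]
  simp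

lemma EPow_of_scaled {m : ℕ} {x w : Vnm n m} {γ : ℂ} (h : ∀ f, Ev x f = γ * Ev w f)
    (k : ℕ) (f : ℕ → Fin n) : EPow m x k f = γ ^ k * EPow m w k f := by
  rw [EPow, EPow]
  rw [Finset.prod_congr rfl (fun (i : Fin k) _ => h _)]
  rw [Finset.prod_mul_distrib]
  simp

lemma telescope (A B : ℕ → ℂ) (a : ℕ) :
    (∏ i : Fin (a + 1), (A i * B i))
      = A 0 * (∏ i : Fin a, (B i * A (i + 1))) * B a := by
  induction a with
  | zero => simp
  | succ a ih =>
    rw [Fin.prod_univ_castSucc (f := fun i : Fin (a + 1 + 1) => A i * B i)]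
    simp only [Fin.coe_castSucc, Fin.val_last]
    rw [ih]
    rw [Fin.prod_univ_castSucc (f := fun i : Fin (a + 1) => B i * A (i + 1))]
    simp only [Fin.coe_castSucc, Fin.val_last]
    ring

lemma cancel {m : ℕ} {x : Vnm n m} (hx : ∃ J, x J ≠ 0) {U V : (ℕ → Fin n) → ℂ}
    (h : ∀ f, Ev x f * U (shf m f) = Ev x f * V (shf m f)) : ∀ g, U g = V g := by
  obtain ⟨J, hJ⟩ := hx
  intro g
  have h2 := h (pad m J g)
  rw [Ev_pad, shf_pad] at h2
  exact mul_left_cancel₀ hJ h2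

lemma pow_eq_scalar {m α : ℕ} (hm : 0 < m) (hα : 1 ≤ α) (x q : Vnm n m)
    (hx : ∃ A, x A ≠ 0)
    (h : ∀ f, EPow m q α f = EPow m x α f) :
    ∃ lam : ℂ, lam ≠ 0 ∧ ∀ J, q J = lam * x J := by
  obtain ⟨A, hA⟩ := hx
  obtain ⟨a, rfl⟩ : ∃ a, α = a + 1 := ⟨α - 1, by omega⟩
  have key : ∀ J, q J * (q A) ^ a = x J * (x A) ^ a := by
    intro J
    have hf := h (pad m J (per m hm A))
    rw [EPow_succ, EPow_succ, Ev_pad, Ev_pad, shf_pad] at hf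
    have e1 : EPow m q a (per m hm A) = (q A) ^ a := EPow_per hm q A a
    have e2 : EPow m x a (per m hm A) = (x A) ^ a := EPow_per hm x A a
    rw [e1, e2] at hf
    exact hf
  rcases Nat.eq_zero_or_pos a with rfl | ha
  · refine ⟨1, one_ne_zero, fun J => by have := key J; simpa using this⟩
  · have hqA : q A ≠ 0 := by
      intro h0
      have hk := key A
      rw [h0, zero_pow (by omega : a ≠ 0), mul_zero] at hk
      rcases mul_eq_zero.mp hk.symm with h1 | h1
      · exact hA h1
      · exact hA ((pow_eq_zero_iff (by omega : a ≠ 0)).mp h1)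
    refine ⟨(x A) ^ a / (q A) ^ a,
      div_ne_zero (pow_ne_zero _ hA) (pow_ne_zero _ hqA), fun J => ?_⟩
    rw [div_mul_eq_mul_div, eq_div_iff (pow_ne_zero a hqA)]
    linear_combination key J

end SubCuntz7
namespace SubCuntz7

variable {n : ℕ}

lemma norm_sq_sum {m : ℕ} (z : Vnm n m) : ‖z‖ = Real.sqrt (∑ J, ‖z J‖ ^ 2) :=
  EuclideanSpace.norm_eq z

lemma norm_castV {m m' : ℕ} (h : m = m') (z : Vnm n m) : ‖castV h z‖ = ‖z‖ := by
  subst h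
  have hc : castV rfl z = z := by
    apply PiLp.ext; intro J
    exact congrArg (fun J => z J) (funext fun i => congrArg J (Fin.ext rfl))
  rw [hc]

def splitE (n m l : ℕ) : ((Fin m → Fin n) × (Fin l → Fin n)) ≃ (Fin (m + l) → Fin n) :=
  (Equiv.sumArrowEquivProdArrow (Fin m) (Fin l) (Fin n)).symm.trans
    (Equiv.arrowCongr finSumFinEquiv (Equiv.refl (Fin n)))

lemma norm_tensV {m l : ℕ} (x : Vnm n m) (y : Vnm n l) : ‖tensV x y‖ = ‖x‖ * ‖y‖ := by
  have he : ∀ p : (Fin m → Fin n) × (Fin l → Fin n),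
      tensV x y (splitE n m l p) = x p.1 * y p.2 := by
    rintro ⟨J, K⟩
    show x _ * y _ = x J * y K
    congr 1
    · refine congrArg (fun J => x J) ?_
      funext i
      show Sum.elim J K (finSumFinEquiv.symm _) = J i
      rw [finSumFinEquiv_symm_apply_castAdd]
      rfl
    · refine congrArg (fun K => y K) ?_
      funext i
      show Sum.elim J K (finSumFinEquiv.symm _) = K i
      rw [finSumFinEquiv_symm_apply_natAdd]
      rfl
  have hsum : (∑ L, ‖tensV x y L‖ ^ 2) = (∑ J, ‖x J‖ ^ 2) * (∑ K, ‖y K‖ ^ 2) := by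
    rw [← Equiv.sum_comp (splitE n m l) (fun L => ‖tensV x y L‖ ^ 2)]
    rw [Finset.sum_congr rfl (fun p _ => by rw [he p, norm_mul, mul_pow])]
    rw [Finset.sum_mul_sum]
    rw [Fintype.sum_prod_type]
  rw [norm_sq_sum, norm_sq_sum, norm_sq_sum, hsum, Real.sqrt_mul (by positivity)]

end SubCuntz7
namespace SubCuntz7

variable {n : ℕ}

def RootE (m l : ℕ) (x : Vnm n m) (y : Vnm n l) : Prop :=
  ∃ (a : ℕ) (w : Vnm n a) (k₁ k₂ : ℕ) (γ₁ γ₂ : ℂ),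
    k₁ * a = m ∧ k₂ * a = l ∧ ‖w‖ = 1 ∧ 1 ≤ k₁ ∧ 1 ≤ k₂ ∧ ‖γ₁‖ = 1 ∧ ‖γ₂‖ = 1 ∧
    (∀ f, Ev x f = γ₁ * EPow a w k₁ f) ∧ (∀ f, Ev y f = γ₂ * EPow a w k₂ f)

lemma RootE_swap {m l : ℕ} {x : Vnm n m} {y : Vnm n l} (h : RootE m l x y) :
    RootE l m y x := by
  obtain ⟨a, w, k₁, k₂, γ₁, γ₂, h₁, h₂, hw, hk₁, hk₂, hγ₁, hγ₂, hx, hy⟩ := h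
  exact ⟨a, w, k₂, k₁, γ₂, γ₁, h₂, h₁, hw, hk₂, hk₁, hγ₂, hγ₁, hy, hx⟩

lemma RootE_of_scalar (hn : 0 < n) {m : ℕ} {x y : Vnm n m} (μ : ℂ)
    (hx : ‖x‖ = 1) (hy : ‖y‖ = 1) (hxy : ∀ J, x J = μ * y J) : RootE m m x y := by
  have hxv : x = μ • y := ev_inj hn (fun f => by rw [Ev_smul]; exact hxy _)
  have hμ : ‖μ‖ = 1 := by
    rw [hxv, norm_smul, hy, mul_one] at hx
    exact hx
  exact ⟨m, y, 1, 1, μ, 1, one_mul m, one_mul m, hy, le_refl 1, le_refl 1, hμ, norm_one,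
    fun f => by rw [EPow_one]; exact hxy _,
    fun f => by rw [EPow_one, one_mul]⟩

lemma tens_of_ev {m l : ℕ} (hn : 0 < n) (hlm : l ≤ m) (x : Vnm n m) (y : Vnm n l)
    (t : Vnm n (m - l)) (h : ∀ f, Ev x f = Ev y f * Ev t (shf l f)) :
    x = castV (by omega : l + (m - l) = m) (tensV y t) := by
  apply ev_inj hn
  intro f
  rw [Ev_castV, Ev_tensV]
  exact h f

lemma norm_eq_one_of_ev_tens {m l : ℕ} (hn : 0 < n) (hlm : l ≤ m)
    {x : Vnm n m} {y : Vnm n l} {t : Vnm n (m - l)}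
    (h : ∀ f, Ev x f = Ev y f * Ev t (shf l f)) (hx : ‖x‖ = 1) (hy : ‖y‖ = 1) :
    ‖t‖ = 1 := by
  have := tens_of_ev hn hlm x y t h
  rw [this, norm_castV, norm_tensV, hy, one_mul] at hx
  exact hx

lemma prefix_step {m l : ℕ} (hml : l < m) (x : Vnm n m) (y : Vnm n l)
    (U V : (ℕ → Fin n) → ℂ) (T : ℕ → Fin n) (hT : U T ≠ 0)
    (h : ∀ f, Ev x f * U (shf m f) = Ev y f * V (shf l f)) :
    ∃ t : Vnm n (m - l), ∀ f, Ev x f = Ev y f * Ev t (shf l f) := by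
  refine ⟨WithLp.toLp 2 fun R => V (pad (m - l) R T) / U T, fun f => ?_⟩
  have hf := h (pad m (fun i => f i) T)
  rw [shf_pad] at hf
  have e1 : Ev x (pad m (fun i : Fin m => f i) T) = Ev x f := by
    unfold Ev
    refine congrArg (fun J => x J) ?_
    funext i
    unfold pad
    rw [dif_pos i.isLt]
  have e2 : Ev y (pad m (fun i : Fin m => f i) T) = Ev y f := by
    unfold Ev
    refine congrArg (fun J => y J) ?_
    funext i
    unfold pad
    rw [dif_pos (by omega : (i : ℕ) < m)]
  have e3 : shf l (pad m (fun i : Fin m => f i) T)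
      = pad (m - l) (fun i : Fin (m - l) => f (l + i)) T := by
    funext i
    unfold shf pad
    by_cases hi : i < m - l
    · rw [dif_pos (by omega : l + i < m), dif_pos hi]
    · rw [dif_neg (by omega), dif_neg hi]
      congr 1
      omega
  rw [e1, e2, e3] at hf
  show Ev x f = Ev y f * (V (pad (m - l) (fun i : Fin (m - l) => (shf l f) i) T) / U T)
  have e4 : (fun i : Fin (m - l) => (shf l f) (i : ℕ)) = fun i : Fin (m - l) => f (l + i) := rfl
  rw [e4, ← mul_div_assoc, eq_div_iff hT]
  exact hf

end SubCuntz7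
namespace SubCuntz7

variable {n : ℕ}

lemma RootE_tens {m l : ℕ} (hl : 0 < l) (hml : l < m)
    {x : Vnm n m} {y : Vnm n l} {t : Vnm n (m - l)}
    (hxe : ∀ f, Ev x f = Ev y f * Ev t (shf l f))
    (h : RootE (m - l) l t y) : RootE m l x y := by
  obtain ⟨a, w, kt, ky, γt, γy, hka, hkb, hw, hkt, hky, hγt, hγy, ht, hy⟩ := h
  refine ⟨a, w, ky + kt, ky, γy * γt, γy, ?_, hkb, hw, by omega, hky, ?_, hγy, ?_, hy⟩
  · rw [add_mul]
    omega
  · rw [norm_mul, hγt, hγy, mul_one]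
  · intro f
    rw [hxe f, hy f, ht (shf l f)]
    have e1 : shf l f = shf (ky * a) f := shf_congr f hkb.symm
    rw [EPow_add a w ky kt f, ← e1]
    ring

lemma commRoot (hn : 0 < n) :
    ∀ N m l (x : Vnm n m) (y : Vnm n l) (c : ℂ), m + l = N → 0 < m → 0 < l →
    ‖x‖ = 1 → ‖y‖ = 1 →
    (∀ f, Ev x f * Ev y (shf m f) = c * (Ev y f * Ev x (shf l f))) →
    RootE m l x y := by
  intro N
  induction N using Nat.strong_induction_on with
  | _ N IH =>
    intro m l x y c hN hm hl hx hy hc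
    obtain ⟨J₀, hJ₀⟩ := exists_coord_ne_zero hx
    obtain ⟨K₀, hK₀⟩ := exists_coord_ne_zero hy
    have hc0 : c ≠ 0 := by
      intro h0
      have h1 := hc (pad m J₀ (per l hl K₀))
      rw [Ev_pad, shf_pad, Ev_per, h0, zero_mul] at h1
      rcases mul_eq_zero.mp h1 with h2 | h2
      · exact hJ₀ h2
      · exact hK₀ h2
    -- the descent step, for l < m
    have step : ∀ (m l : ℕ) (x : Vnm n m) (y : Vnm n l) (c : ℂ), m + l = N → 0 < l →
        l < m → ‖x‖ = 1 → ‖y‖ = 1 →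
        (∀ f, Ev x f * Ev y (shf m f) = c * (Ev y f * Ev x (shf l f))) →
        RootE m l x y := by
      intro m l x y c hN hl hml hx hy hc
      obtain ⟨K₀, hK₀⟩ := exists_coord_ne_zero hy
      -- prefix step
      have hpre : ∃ t : Vnm n (m - l), ∀ f, Ev x f = Ev y f * Ev t (shf l f) := by
        apply prefix_step hml x y (fun g => Ev y g) (fun g => c * Ev x g) (per l hl K₀)
        · rw [Ev_per]
          exact hK₀
        · intro f
          rw [hc f]
          ring
      obtain ⟨t, htx⟩ := hpre
      have ht1 : ‖t‖ = 1 := norm_eq_one_of_ev_tens hn (le_of_lt hml) htx hx hy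
      -- cancellation to get the commutation relation for (t, y)
      have hmain : ∀ f, Ev y f * ((fun g => Ev t g * Ev y (shf (m - l) g)) (shf l f))
          = Ev y f * ((fun g => c * (Ev y g * Ev t (shf l g))) (shf l f)) := by
        intro f
        simp only
        have h1 := hc f
        rw [htx f, htx (shf l f)] at h1
        have e1 : Ev y (shf m f) = Ev y (shf (m - l) (shf l f)) := by
          rw [shf_shf]
          exact congrArg (Ev y) (shf_congr f (by omega)).symm
        rw [e1] at h1
        linear_combination h1
      have hcty := cancel (x := y) ⟨K₀, hK₀⟩ (U := fun g => Ev t g * Ev y (shf (m - l) g)) (V := fun g => c * (Ev y g * Ev t (shf l g))) hmain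
      -- induction
      have hrec : RootE (m - l) l t y := by
        apply IH m (by omega) (m - l) l t y c (by omega) (by omega) hl ht1 hy
        intro f
        exact hcty f
      exact RootE_tens hl hml htx hrec
    rcases lt_trichotomy m l with hml | hml | hml
    · -- m < l : swap
      apply RootE_swap
      apply step l m y x c⁻¹ (by omega) hm hml hy hx
      intro f
      rw [eq_inv_mul_iff_mul_eq₀ hc0]
      rw [← hc f]
    · -- m = l
      subst hml
      have key : ∀ J, x J * y J₀ = c * (y J * x J₀) := by
        intro J
        have h1 := hc (pad m J (per m hm J₀))
        rwa [Ev_pad, Ev_pad, shf_pad, Ev_per, Ev_per] at h1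
      have hyJ₀ : y J₀ ≠ 0 := by
        intro h0
        have h1 := key K₀
        rw [h0, mul_zero] at h1
        rcases mul_eq_zero.mp h1.symm with h2 | h2
        · exact hc0 h2
        rcases mul_eq_zero.mp h2 with h3 | h3
        · exact hK₀ h3
        · exact hJ₀ h3
      apply RootE_of_scalar hn (c * x J₀ / y J₀) hx hy
      intro J
      rw [div_mul_eq_mul_div, eq_div_iff hyJ₀]
      linear_combination key J
    · exact step m l x y c hN hl hml hx hy hc
end SubCuntz7
namespace SubCuntz7

variable {n : ℕ}

lemma powRootAux (hn : 0 < n) {m l α β : ℕ} (hm : 0 < m) (hl : 0 < l)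
    (hα : 1 ≤ α) (hβ : 1 ≤ β) (hml : l < m)
    (x : Vnm n m) (y : Vnm n l) (hx : ‖x‖ = 1) (hy : ‖y‖ = 1)
    (hd : α * m = β * l) (H : ∀ f, EPow m x α f = EPow l y β f) : RootE m l x y := by
  obtain ⟨J₀, hJ₀⟩ := exists_coord_ne_zero hx
  obtain ⟨K₀, hK₀⟩ := exists_coord_ne_zero hy
  obtain ⟨a, rfl⟩ : ∃ a, α = a + 1 := ⟨α - 1, by omega⟩
  obtain ⟨b, rfl⟩ : ∃ b, β = b + 1 := ⟨β - 1, by omega⟩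
  rcases Nat.eq_zero_or_pos a with rfl | ha
  · -- α = 1 : x is itself a power of y
    refine ⟨l, y, b + 1, 1, 1, 1, by omega, one_mul l, hy, by omega, le_refl 1,
      norm_one, norm_one, ?_, ?_⟩
    · intro f
      rw [one_mul, ← H f, EPow_one]
    · intro f
      rw [one_mul, EPow_one]
  -- now α = a + 1 with a ≥ 1
  have H' : ∀ f, Ev x f * EPow m x a (shf m f) = Ev y f * EPow l y b (shf l f) := by
    intro f
    have h1 := H f
    rwa [EPow_succ, EPow_succ] at h1
  -- prefix step
  obtain ⟨t, htx⟩ := prefix_step hml x y (EPow m x a) (EPow l y b) (per m hm J₀)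
    (by rw [EPow_per]; exact pow_ne_zero a hJ₀) H'
  have ht1 : ‖t‖ = 1 := norm_eq_one_of_ev_tens hn (le_of_lt hml) htx hx hy
  -- cancellation : the starred equation
  have hmain : ∀ f, Ev y f * ((fun g => Ev t g * EPow m x a (shf (m - l) g)) (shf l f))
      = Ev y f * ((fun g => EPow l y b g) (shf l f)) := by
    intro f
    simp only
    have h1 := H' f
    rw [htx f] at h1
    have e1 : EPow m x a (shf m f) = EPow m x a (shf (m - l) (shf l f)) := by
      rw [shf_shf]
      exact congrArg (EPow m x a) (shf_congr f (by omega)).symm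
    rw [e1] at h1
    linear_combination h1
  have hstar := cancel (x := y) ⟨K₀, hK₀⟩
    (U := fun g => Ev t g * EPow m x a (shf (m - l) g)) (V := fun g => EPow l y b g) hmain
  -- the commutation equation via telescoping
  have hcomm : ∀ f, EPow m (castV (by omega : (m - l) + l = m) (tensV t y)) (a + 1) f
      = EPow m x (a + 1) f := by
    intro f
    have hq : ∀ g, Ev (castV (by omega : (m - l) + l = m) (tensV t y)) g
        = Ev t g * Ev y (shf (m - l) g) := fun g => rfl
    have e0 : EPow m (castV (by omega : (m - l) + l = m) (tensV t y)) (a + 1) f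
        = ∏ i : Fin (a + 1),
            ((fun j : ℕ => Ev t (shf (j * m) f)) i
              * (fun j : ℕ => Ev y (shf ((j : ℕ) * m + (m - l)) f)) i) := by
      rw [EPow]
      apply Finset.prod_congr rfl
      intro i _
      rw [hq]
      congr 1
      rw [shf_shf]
    rw [e0, telescope (fun j : ℕ => Ev t (shf (j * m) f))
      (fun j : ℕ => Ev y (shf (j * m + (m - l)) f)) a]
    -- A 0 = Ev t f
    have eA0 : Ev t (shf (0 * m) f) = Ev t f := by
      rw [Nat.zero_mul, shf_zero]
    -- middle product = EPow m x a (shf (m-l) f)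
    have emid : (∏ i : Fin a, (Ev y (shf ((i : ℕ) * m + (m - l)) f)
        * Ev t (shf (((i : ℕ) + 1) * m) f)))
        = EPow m x a (shf (m - l) f) := by
      rw [EPow]
      apply Finset.prod_congr rfl
      intro i _
      have h2 := htx (shf ((i : ℕ) * m + (m - l)) f)
      rw [shf_shf] at h2
      have e2 : shf ((i : ℕ) * m + (m - l) + l) f = shf (((i : ℕ) + 1) * m) f :=
        shf_congr f (by have := hml.le; ring_nf; omega)
      rw [e2] at h2
      rw [← h2]
      congr 1
      rw [shf_shf]
      exact shf_congr f (by ring)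
    rw [eA0, emid, hstar f]
    -- last factor
    have elast : Ev y (shf ((a : ℕ) * m + (m - l)) f) = Ev y (shf (b * l) f) := by
      apply congrArg (Ev y)
      apply shf_congr
      have : (a + 1) * m = (b + 1) * l := hd
      have h3 : a * m + m = b * l + l := by ring_nf at this ⊢; omega
      omega
    rw [elast, ← EPow_succ_last]
    exact (H f).symm
  -- q = lam • x
  have hq0 : ∀ f, EPow m (castV (by omega : (m - l) + l = m) (tensV t y)) (a + 1) f
      = EPow m x (a + 1) f := hcomm
  obtain ⟨lam, hlam0, hlam⟩ := pow_eq_scalar hm (by omega)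
    x (castV (by omega : (m - l) + l = m) (tensV t y)) ⟨J₀, hJ₀⟩ hq0
  -- commutation hypothesis for (t, y)
  have hcty : ∀ g, Ev t g * Ev y (shf (m - l) g) = lam * (Ev y g * Ev t (shf l g)) := by
    intro g
    have h1 : Ev (castV (by omega : (m - l) + l = m) (tensV t y)) g = lam * Ev x g := by
      unfold Ev
      exact hlam _
    rw [htx g] at h1
    exact h1
  have hrec : RootE (m - l) l t y :=
    commRoot hn ((m - l) + l) (m - l) l t y lam rfl (by omega) hl ht1 hy hcty
  exact RootE_tens hl hml htx hrec

lemma powRoot (hn : 0 < n) {m l α β : ℕ} (hm : 0 < m) (hl : 0 < l)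
    (hα : 1 ≤ α) (hβ : 1 ≤ β)
    (x : Vnm n m) (y : Vnm n l) (hx : ‖x‖ = 1) (hy : ‖y‖ = 1)
    (hd : α * m = β * l) (H : ∀ f, EPow m x α f = EPow l y β f) : RootE m l x y := by
  rcases lt_trichotomy l m with hml | hml | hml
  · exact powRootAux hn hm hl hα hβ hml x y hx hy hd H
  · subst hml
    have hαβ : α = β := by
      have := hd
      exact Nat.eq_of_mul_eq_mul_right hm this
    subst hαβ
    obtain ⟨K₀, hK₀⟩ := exists_coord_ne_zero hy
    obtain ⟨lam, hlam0, hlam⟩ := pow_eq_scalar hm hα y x ⟨K₀, hK₀⟩ (fun f => H f)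
    exact RootE_of_scalar hn lam hx hy hlam
  · exact RootE_swap (powRootAux hn hl hm hβ hα hml y x hy hx hd.symm (fun f => (H f).symm))

end SubCuntz7
namespace SubCuntz7

variable {n : ℕ}

lemma exists_phase_root {k : ℕ} (hk : 0 < k) {γ : ℂ} (hγ : ‖γ‖ = 1) :
    ∃ δ : ℂ, δ ^ k = γ ∧ ‖δ‖ = 1 := by
  obtain ⟨δ, hδ⟩ := IsAlgClosed.exists_pow_nat_eq γ hk
  refine ⟨δ, hδ, ?_⟩
  have h1 : ‖δ‖ ^ k = 1 := by
    rw [← norm_pow, hδ, hγ]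
  have h2 : ‖δ‖ ^ k = 1 ^ k := by rw [h1, one_pow]
  exact (pow_left_inj₀ (norm_nonneg δ) zero_le_one (by omega : k ≠ 0)).mp h2

lemma periodic_of_power (hn : 0 < n) {m a k : ℕ} (ha : 0 < a) (hk : 2 ≤ k)
    (h₁ : k * a = m) {x : Vnm n m} {w : Vnm n a} {γ : ℂ} (hw : ‖w‖ = 1) (hγ : ‖γ‖ = 1)
    (hx : ∀ f, Ev x f = γ * EPow a w k f) : PeriodicV x := by
  obtain ⟨δ, hδ, hδ1⟩ := exists_phase_root (by omega : 0 < k) hγ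
  refine ⟨a, k, δ • w, h₁, ?_, hk, ?_⟩
  · rw [norm_smul, hδ1, hw, mul_one]
  · apply ev_inj hn
    intro f
    rw [Ev_castV, Ev_tpow, EPow_smul, hδ, hx f]

end SubCuntz7

open SubCuntz7

/-- if `x^{⊗α} = y^{⊗β}` for some `α, β ≥ 1`, then `x` and `y` are powers
of a common unit vector `w` up to phases; in particular, if `m > l` then `x` is periodic,
and if `x` is nonperiodic then `y = c x^{⊗d}` for some `d ≥ 1` and `|c| = 1`. -/
theorem subCuntz_stmt7 {n m l : ℕ} (hn : 2 ≤ n) (hm : 1 ≤ m) (hl : 1 ≤ l)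
    (x : Vnm n m) (y : Vnm n l) (hx : ‖x‖ = 1) (hy : ‖y‖ = 1)
    (α β : ℕ) (hα : 1 ≤ α) (hβ : 1 ≤ β) (hd : α * m = β * l)
    (heq : castV hd (tpowV x α) = tpowV y β) :
    (∃ (a : ℕ) (w : Vnm n a) (k₁ k₂ : ℕ) (γ₁ γ₂ : ℂ)
        (h₁ : k₁ * a = m) (h₂ : k₂ * a = l),
      ‖w‖ = 1 ∧ 1 ≤ k₁ ∧ 1 ≤ k₂ ∧ ‖γ₁‖ = 1 ∧ ‖γ₂‖ = 1 ∧
      x = γ₁ • castV h₁ (tpowV w k₁) ∧ y = γ₂ • castV h₂ (tpowV w k₂)) ∧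
    (l < m → PeriodicV x) ∧
    (¬ PeriodicV x → ∃ (d : ℕ) (c : ℂ) (h : d * m = l),
      1 ≤ d ∧ ‖c‖ = 1 ∧ y = c • castV h (tpowV x d)) := by
  have hn0 : 0 < n := by omega
  have H : ∀ f, EPow m x α f = EPow l y β f := by
    intro f
    have h1 := congrArg (fun z : Vnm n (β * l) => Ev z f) heq
    simpa only [Ev_castV, Ev_tpow] using h1
  obtain ⟨a, w, k₁, k₂, γ₁, γ₂, h₁, h₂, hw, hk₁, hk₂, hγ₁, hγ₂, hex, hey⟩ :=
    powRoot hn0 hm hl hα hβ x y hx hy hd H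
  have ha : 0 < a := by
    rcases Nat.eq_zero_or_pos a with rfl | h
    · rw [Nat.mul_zero] at h₁; omega
    · exact h
  have hxv : x = γ₁ • castV h₁ (tpowV w k₁) := by
    apply ev_inj hn0
    intro f
    rw [Ev_smul, Ev_castV, Ev_tpow]
    exact hex f
  have hyv : y = γ₂ • castV h₂ (tpowV w k₂) := by
    apply ev_inj hn0
    intro f
    rw [Ev_smul, Ev_castV, Ev_tpow]
    exact hey f
  refine ⟨⟨a, w, k₁, k₂, γ₁, γ₂, h₁, h₂, hw, hk₁, hk₂, hγ₁, hγ₂, hxv, hyv⟩, ?_, ?_⟩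
  · intro hlm
    have hk₁2 : 2 ≤ k₁ := by
      by_contra hcon
      have hk1 : k₁ = 1 := by omega
      have hal : a ≤ l := by
        calc a = 1 * a := (one_mul a).symm
        _ ≤ k₂ * a := Nat.mul_le_mul_right a hk₂
        _ = l := h₂
      rw [hk1, one_mul] at h₁
      omega
    exact periodic_of_power hn0 ha hk₁2 h₁ hw hγ₁ hex
  · intro hnp
    have hk₁1 : k₁ = 1 := by
      by_contra hcon
      exact hnp (periodic_of_power hn0 ha (by omega) h₁ hw hγ₁ hex)
    subst hk₁1
    rw [one_mul] at h₁
    subst h₁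
    have hγ₁0 : γ₁ ≠ 0 := by
      intro h0
      rw [h0] at hγ₁
      simp at hγ₁
    refine ⟨k₂, γ₂ / γ₁ ^ k₂, h₂, hk₂, ?_, ?_⟩
    · rw [norm_div, norm_pow, hγ₁, hγ₂, one_pow, div_one]
    · apply ev_inj hn0
      intro f
      rw [Ev_smul, Ev_castV, Ev_tpow]
      rw [hey f]
      have hsc : ∀ g, Ev x g = γ₁ * Ev w g := by
        intro g
        rw [hex g, EPow_one]
      rw [EPow_of_scaled hsc k₂ f]
      field_simp
end
end
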